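/- arXiv:math/0507545 — 5 statements merged into one kernel-verified Lean document; each statement's English description precedes it below -/
import Mathlib

section
/- Let ρ : (0,∞) → (0,∞) be strictly increasing and suppose that ∫_ε^1 ρ(x)^{-2} dx → ∞ as ε → 0+. Then also ∫_ε^1 (ρ(x) + √x)^{-2} dx → ∞ as ε → 0+. -/
open Real Filter MeasureTheory Set

lemma aux_min_le (p s : ℝ) (hp : 0 < p) (hs : 0 < s) :
    min (p⁻¹ ^ 2) (s⁻¹ ^ 2) ≤ 4 * (p + s)⁻¹ ^ 2 := by
  rcases le_total p s with h | h
  · refine le_trans (min_le_right _ _) ?_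
    rw [inv_pow, inv_pow, ← one_div, ← one_div, mul_one_div,
      div_le_div_iff₀ (by positivity) (by positivity)]
    nlinarith
  · refine le_trans (min_le_left _ _) ?_
    rw [inv_pow, inv_pow, ← one_div, ← one_div, mul_one_div,
      div_le_div_iff₀ (by positivity) (by positivity)]
    nlinarith

/-- If `ρ` is strictly increasing and positive on `(0,∞)` and
`∫_ε^1 ρ(x)⁻² dx → ∞` as `ε → 0⁺`, then also `∫_ε^1 (ρ(x)+√x)⁻² dx → ∞` as `ε → 0⁺`. -/
theorem integral_inv_sq_add_sqrt_tendsto_atTop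
    (ρ : ℝ → ℝ) (hpos : ∀ x ∈ Set.Ioi (0 : ℝ), 0 < ρ x)
    (hmono : StrictMonoOn ρ (Set.Ioi 0))
    (hdiv : Tendsto (fun ε : ℝ => ∫ x in ε..1, (ρ x)⁻¹ ^ 2)
      (nhdsWithin 0 (Set.Ioi 0)) atTop) :
    Tendsto (fun ε : ℝ => ∫ x in ε..1, (ρ x + Real.sqrt x)⁻¹ ^ 2)
      (nhdsWithin 0 (Set.Ioi 0)) atTop := by
  -- a monotone (hence measurable) extension of ρ
  set τ : ℝ → ℝ := fun x => if x ≤ 0 then 0 else ρ x with hτdef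
  have hτρ : ∀ x, 0 < x → τ x = ρ x := by
    intro x hx; simp [hτdef, not_le.2 hx]
  have hτpos : ∀ x, 0 < x → 0 < τ x := by
    intro x hx; rw [hτρ x hx]; exact hpos x hx
  have hτmono : Monotone τ := by
    intro x y hxy
    rcases le_or_gt y 0 with hy | hy
    · simp [hτdef, hxy.trans hy, hy]
    rcases le_or_gt x 0 with hx | hx
    · simp only [hτdef, if_pos hx, if_neg (not_le.2 hy)]
      exact (hpos y hy).le
    · simp only [hτdef, if_neg (not_le.2 hx), if_neg (not_le.2 hy)]
      exact hmono.monotoneOn hx hy hxy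
  have hτmeas : Measurable τ := hτmono.measurable
  -- real-valued integrands
  set f : ℝ → ℝ := fun x => (τ x)⁻¹ ^ 2 with hfdef
  set g : ℝ → ℝ := fun x => (τ x + Real.sqrt x)⁻¹ ^ 2 with hgdef
  set h : ℝ → ℝ := fun x => min ((τ x)⁻¹ ^ 2) x⁻¹ with hhdef
  have hfmeas : Measurable f := (hτmeas.inv).pow_const 2
  have hgmeas : Measurable g := ((hτmeas.add Real.continuous_sqrt.measurable).inv).pow_const 2
  have hhmeas : Measurable h := hfmeas.min measurable_inv
  have hf_nonneg : ∀ x, 0 ≤ f x := fun x => by positivity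
  have hg_nonneg : ∀ x, 0 ≤ g x := fun x => by positivity
  have hh_nonneg : ∀ x, 0 < x → 0 ≤ h x := fun x hx =>
    le_min (hf_nonneg x) (by positivity)
  -- antitonicity on (0,∞)
  have hf_anti : ∀ x y : ℝ, 0 < x → x ≤ y → f y ≤ f x := by
    intro x y hx hxy
    have h1 : τ x ≤ τ y := hτmono hxy
    have h2 : 0 < τ x := hτpos x hx
    simp only [hfdef]
    have h4 : 0 < τ y := lt_of_lt_of_le h2 h1
    have h3 : (τ y)⁻¹ ≤ (τ x)⁻¹ := inv_anti₀ h2 h1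
    exact pow_le_pow_left₀ (inv_nonneg.2 h4.le) h3 2
  have hh_anti : ∀ x y : ℝ, 0 < x → x ≤ y → h y ≤ h x := by
    intro x y hx hxy
    exact min_le_min (hf_anti x y hx hxy) (inv_anti₀ hx hxy)
  -- pointwise comparison h ≤ 4 g on (0,∞)
  have hhg : ∀ x : ℝ, 0 < x → h x ≤ 4 * g x := by
    intro x hx
    have hs : (0:ℝ) < Real.sqrt x := Real.sqrt_pos.2 hx
    have := aux_min_le (τ x) (Real.sqrt x) (hτpos x hx) hs
    have hsq : ((Real.sqrt x)⁻¹) ^ 2 = x⁻¹ := by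
      rw [inv_pow, Real.sq_sqrt hx.le]
    simpa [hhdef, hgdef, hsq] using this
  have hgf : ∀ x : ℝ, 0 < x → g x ≤ f x := by
    intro x hx0
    have hτx : 0 < τ x := hτpos x hx0
    simp only [hgdef, hfdef]
    have h1 : (τ x + Real.sqrt x)⁻¹ ≤ (τ x)⁻¹ :=
      inv_anti₀ hτx (le_add_of_nonneg_right (Real.sqrt_nonneg x))
    exact pow_le_pow_left₀ (inv_nonneg.2 (by positivity)) h1 2
  -- ENNReal versions
  set F : ℝ → ENNReal := fun x => ENNReal.ofReal (f x) with hFdef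
  set G : ℝ → ENNReal := fun x => ENNReal.ofReal (g x) with hGdef
  set H : ℝ → ENNReal := fun x => ENNReal.ofReal (h x) with hHdef
  have hFmeas : Measurable F := hfmeas.ennreal_ofReal
  have hGmeas : Measurable G := hgmeas.ennreal_ofReal
  have hHmeas : Measurable H := hhmeas.ennreal_ofReal
  -- boundedness on [a,1] and integrability
  have hint_g : ∀ a : ℝ, 0 < a → IntegrableOn g (Ioc a 1) := by
    intro a ha
    refine Measure.integrableOn_of_bounded (M := f a) (by simp) hgmeas.aestronglyMeasurable ?_
    filter_upwards [ae_restrict_mem measurableSet_Ioc] with x hx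
    rw [Real.norm_of_nonneg (hg_nonneg x)]
    have hx0 : 0 < x := lt_of_lt_of_le ha hx.1.le
    calc g x ≤ f x := hgf x hx0
      _ ≤ f a := hf_anti a x ha hx.1.le
  have hint_f : ∀ a : ℝ, 0 < a → IntegrableOn f (Ioc a 1) := by
    intro a ha
    refine Measure.integrableOn_of_bounded (M := f a) (by simp) hfmeas.aestronglyMeasurable ?_
    filter_upwards [ae_restrict_mem measurableSet_Ioc] with x hx
    rw [Real.norm_of_nonneg (hf_nonneg x)]
    exact hf_anti a x ha hx.1.le
  -- The key claim: the lintegral of G over (0,1] is infinite.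
  have key : ∫⁻ x in Ioc (0:ℝ) 1, G x = ⊤ := by
    by_contra hfin
    -- then the lintegral of H is finite
    have hHfin : ∫⁻ x in Ioc (0:ℝ) 1, H x < ⊤ := by
      have hle : ∫⁻ x in Ioc (0:ℝ) 1, H x ≤ ∫⁻ x in Ioc (0:ℝ) 1, 4 * G x := by
        refine setLIntegral_mono (hGmeas.const_mul 4) ?_
        intro x hx
        have := hhg x hx.1
        calc H x = ENNReal.ofReal (h x) := rfl
          _ ≤ ENNReal.ofReal (4 * g x) := ENNReal.ofReal_le_ofReal this
          _ = 4 * G x := by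
              rw [ENNReal.ofReal_mul (by norm_num)]
              simp [hGdef, ENNReal.ofReal_ofNat]
      have : ∫⁻ x in Ioc (0:ℝ) 1, 4 * G x = 4 * ∫⁻ x in Ioc (0:ℝ) 1, G x :=
        lintegral_const_mul 4 hGmeas
      rw [this] at hle
      exact lt_of_le_of_lt hle (ENNReal.mul_lt_top (by norm_num) (lt_top_iff_ne_top.2 hfin))
    -- choose δ with small tail of H
    set ν : Measure ℝ := volume.withDensity H with hνdef
    have hν : ∀ s : Set ℝ, MeasurableSet s → ν s = ∫⁻ x in s, H x :=
      fun s hs => withDensity_apply H hs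
    have htend : Tendsto (fun n : ℕ => ν (Ioc (0:ℝ) (1/(n+1)))) atTop (nhds (ν (⋂ n : ℕ, Ioc (0:ℝ) (1/(n+1))))) := by
      refine tendsto_measure_iInter_atTop (fun n => (measurableSet_Ioc).nullMeasurableSet) ?_ ?_
      · intro m n hmn
        refine Ioc_subset_Ioc le_rfl ?_
        apply one_div_le_one_div_of_le (by positivity)
        have : (m:ℝ) ≤ n := Nat.cast_le.2 hmn
        linarith
      · refine ⟨0, ?_⟩
        rw [hν _ measurableSet_Ioc]
        simp only [Nat.cast_zero, zero_add, div_one]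
        exact hHfin.ne
    have hiInter : (⋂ n : ℕ, Ioc (0:ℝ) (1/(n+1))) = ∅ := by
      apply eq_empty_iff_forall_notMem.2
      intro x hx
      have hx0 : 0 < x := (mem_iInter.1 hx 0).1
      obtain ⟨n, hn⟩ := exists_nat_one_div_lt hx0
      exact absurd (mem_iInter.1 hx n).2 (not_le.2 hn)
    rw [hiInter, measure_empty] at htend
    obtain ⟨n, hn⟩ := (htend.eventually_lt_const (show (0:ENNReal) < 1/2 by norm_num)).exists
    set δ : ℝ := 1/(n+1) with hδdef
    have hδpos : 0 < δ := by positivity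
    have hδ1 : δ ≤ 1 := by
      rw [hδdef]
      rw [div_le_one (by positivity)]
      linarith [Nat.cast_nonneg (α := ℝ) n]
    -- on (0, δ], h = f
    have hHf : ∀ x ∈ Ioc (0:ℝ) δ, h x = f x := by
      intro x hx
      have hx0 : 0 < x := hx.1
      -- lower bound the integral of H over (x/2, x]
      have hsub : Ioc (x/2) x ⊆ Ioc (0:ℝ) δ := Ioc_subset_Ioc (by linarith) hx.2
      have hlow : ENNReal.ofReal (h x) * ENNReal.ofReal (x/2) ≤ ν (Ioc (0:ℝ) δ) := by
        rw [hν _ measurableSet_Ioc]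
        calc ENNReal.ofReal (h x) * ENNReal.ofReal (x/2)
            = ∫⁻ _ in Ioc (x/2) x, ENNReal.ofReal (h x) := by
              rw [setLIntegral_const, Real.volume_Ioc]
              congr 1
              congr 1
              ring
          _ ≤ ∫⁻ y in Ioc (x/2) x, H y := by
              refine setLIntegral_mono hHmeas ?_
              intro y hy
              exact ENNReal.ofReal_le_ofReal (hh_anti y x (by linarith [hy.1]) hy.2)
          _ ≤ ∫⁻ y in Ioc (0:ℝ) δ, H y := lintegral_mono_set hsub
      have hlt : ENNReal.ofReal (h x * (x/2)) < 1/2 := by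
        rw [ENNReal.ofReal_mul (hh_nonneg x hx0)]
        exact lt_of_le_of_lt hlow hn
      -- convert to a real inequality
      have h12 : ENNReal.ofReal ((1:ℝ)/2) = 1/2 := by
        rw [ENNReal.ofReal_div_of_pos (by norm_num)]
        norm_num
      rw [← h12] at hlt
      have hreal : h x * (x/2) < 1/2 :=
        (ENNReal.ofReal_lt_ofReal_iff (by norm_num)).1 hlt
      have hhx : h x < x⁻¹ := by
        rw [← one_div, lt_div_iff₀ hx0]
        nlinarith
      have hlt' : (τ x)⁻¹ ^ 2 < x⁻¹ := by
        rcases min_lt_iff.1 hhx with h' | h'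
        · exact h'
        · exact absurd h' (lt_irrefl _)
      exact min_eq_left hlt'.le
    -- hence f has finite lintegral near 0
    have hFδ : ∫⁻ x in Ioc (0:ℝ) δ, F x < ⊤ := by
      have : ∫⁻ x in Ioc (0:ℝ) δ, F x = ∫⁻ x in Ioc (0:ℝ) δ, H x := by
        refine setLIntegral_congr_fun measurableSet_Ioc ?_
        intro x hx
        show ENNReal.ofReal (f x) = ENNReal.ofReal (h x)
        rw [hHf x hx]
      rw [this, ← hν _ measurableSet_Ioc]
      exact lt_trans hn (by norm_num)
    have hFδ1 : ∫⁻ x in Ioc δ 1, F x < ⊤ := by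
      calc ∫⁻ x in Ioc δ 1, F x ≤ ∫⁻ _ in Ioc δ 1, ENNReal.ofReal (f δ) := by
            refine setLIntegral_mono measurable_const ?_
            intro x hx
            exact ENNReal.ofReal_le_ofReal (hf_anti δ x hδpos hx.1.le)
        _ = ENNReal.ofReal (f δ) * volume (Ioc δ 1) := setLIntegral_const _ _
        _ < ⊤ := by
            refine ENNReal.mul_lt_top ENNReal.ofReal_lt_top ?_
            rw [Real.volume_Ioc]
            exact ENNReal.ofReal_lt_top
    have hFfin : ∫⁻ x in Ioc (0:ℝ) 1, F x < ⊤ := by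
      rw [← Ioc_union_Ioc_eq_Ioc hδpos.le hδ1,
        lintegral_union measurableSet_Ioc (Ioc_disjoint_Ioc_of_le le_rfl)]
      exact ENNReal.add_lt_top.2 ⟨hFδ, hFδ1⟩
    -- contradict hdiv
    set M : ℝ := (∫⁻ x in Ioc (0:ℝ) 1, F x).toReal with hMdef
    have hbound : ∀ ε : ℝ, ε ∈ Ioo (0:ℝ) 1 → (∫ x in ε..1, (ρ x)⁻¹ ^ 2) ≤ M := by
      intro ε hε
      rw [intervalIntegral.integral_of_le hε.2.le]
      have heq : ∫ x in Ioc ε 1, (ρ x)⁻¹ ^ 2 = ∫ x in Ioc ε 1, f x := by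
        refine setIntegral_congr_fun measurableSet_Ioc ?_
        intro x hx
        rw [hfdef]
        simp [hτρ x (lt_trans hε.1 hx.1)]
      rw [heq]
      have : ∫ x in Ioc ε 1, f x = (∫⁻ x in Ioc ε 1, F x).toReal := by
        rw [integral_eq_lintegral_of_nonneg_ae]
        · exact Eventually.of_forall hf_nonneg
        · exact hfmeas.aestronglyMeasurable.restrict
      rw [this, hMdef]
      refine ENNReal.toReal_mono hFfin.ne ?_
      exact lintegral_mono_set (Ioc_subset_Ioc hε.1.le le_rfl)
    have h1 : ∀ᶠ ε in nhdsWithin (0:ℝ) (Set.Ioi 0), M + 1 ≤ ∫ x in ε..1, (ρ x)⁻¹ ^ 2 :=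
      hdiv.eventually_ge_atTop (M+1)
    have h2 : ∀ᶠ ε in nhdsWithin (0:ℝ) (Set.Ioi 0), ε ∈ Ioo (0:ℝ) 1 := by
      refine eventually_nhdsWithin_iff.2 ?_
      filter_upwards [eventually_lt_nhds one_pos] with x hx hx0
      exact ⟨hx0, hx⟩
    obtain ⟨ε, hε1, hε2⟩ := (h1.and h2).exists
    linarith [hbound ε hε2]
  -- Now derive the conclusion from the key claim.
  rw [tendsto_atTop]
  intro C
  set ν' : Measure ℝ := volume.withDensity G with hν'def
  have hν' : ∀ s : Set ℝ, MeasurableSet s → ν' s = ∫⁻ x in s, G x :=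
    fun s hs => withDensity_apply G hs
  have hmon : Monotone (fun n : ℕ => Ioc (1/(n+1):ℝ) 1) := by
    intro m n hmn
    refine Ioc_subset_Ioc ?_ le_rfl
    apply one_div_le_one_div_of_le (by positivity)
    have : (m:ℝ) ≤ n := Nat.cast_le.2 hmn
    linarith
  have hU : (⋃ n : ℕ, Ioc (1/(n+1):ℝ) 1) = Ioc (0:ℝ) 1 := by
    apply Subset.antisymm
    · exact iUnion_subset fun n => Ioc_subset_Ioc (by positivity) le_rfl
    · intro x hx
      obtain ⟨n, hn⟩ := exists_nat_one_div_lt hx.1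
      exact mem_iUnion.2 ⟨n, hn, hx.2⟩
  have htend := tendsto_measure_iUnion_atTop (μ := ν') hmon
  rw [hU, hν' _ measurableSet_Ioc, key] at htend
  have hev : ∀ᶠ n : ℕ in atTop, ENNReal.ofReal (max C 0) < ν' (Ioc (1/(n+1):ℝ) 1) :=
    htend.eventually_const_lt ENNReal.ofReal_lt_top
  obtain ⟨n, hn⟩ := hev.exists
  set a : ℝ := 1/(n+1) with hadef
  have ha : 0 < a := by positivity
  have ha1 : a ≤ 1 := by
    rw [hadef, div_le_one (by positivity)]
    linarith [Nat.cast_nonneg (α := ℝ) n]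
  rw [hν' _ measurableSet_Ioc] at hn
  -- finiteness of the lintegral over (a,1]
  have hGfin : ∫⁻ x in Ioc a 1, G x ≠ ⊤ := by
    have hle : ∫⁻ x in Ioc a 1, G x ≤ ∫⁻ _ in Ioc a 1, ENNReal.ofReal (f a) := by
      refine setLIntegral_mono measurable_const fun x hx => ?_
      refine ENNReal.ofReal_le_ofReal ?_
      exact le_trans (hgf x (lt_trans ha hx.1)) (hf_anti a x ha hx.1.le)
    refine ne_top_of_le_ne_top ?_ hle
    rw [setLIntegral_const]
    refine (ENNReal.mul_lt_top ENNReal.ofReal_lt_top ?_).ne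
    rw [Real.volume_Ioc]
    exact ENNReal.ofReal_lt_top
  have hCa : C < ∫ x in Ioc a 1, g x := by
    have heq : ∫ x in Ioc a 1, g x = (∫⁻ x in Ioc a 1, G x).toReal := by
      rw [integral_eq_lintegral_of_nonneg_ae (Eventually.of_forall hg_nonneg)
        hgmeas.aestronglyMeasurable.restrict]
    rw [heq]
    calc C ≤ max C 0 := le_max_left _ _
      _ < (∫⁻ x in Ioc a 1, G x).toReal :=
        (ENNReal.ofReal_lt_iff_lt_toReal (le_max_right _ _) hGfin).1 hn
  filter_upwards [Ioo_mem_nhdsGT_of_mem (show (0:ℝ) ∈ Ico (0:ℝ) a from ⟨le_rfl, ha⟩)] with ε hε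
  have hε0 : 0 < ε := hε.1
  have hεa : ε ≤ a := hε.2.le
  rw [intervalIntegral.integral_of_le (hεa.trans ha1)]
  have heq2 : ∫ x in Ioc ε 1, (ρ x + Real.sqrt x)⁻¹ ^ 2 = ∫ x in Ioc ε 1, g x := by
    refine setIntegral_congr_fun measurableSet_Ioc fun x hx => ?_
    simp only [hgdef]
    rw [hτρ x (lt_of_lt_of_le hε0 hx.1.le)]
  rw [heq2]
  refine le_trans hCa.le ?_
  refine setIntegral_mono_set (hint_g ε hε0) ?_ ?_
  · exact Eventually.of_forall fun x => hg_nonneg x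
  · exact HasSubset.Subset.eventuallyLE (Ioc_subset_Ioc hεa le_rfl)
end

section
/- Let 0 < a < b and let ψ : ℝ → ℝ be a nonnegative continuous function that vanishes outside the interval (a, b) and satisfies ∫_ℝ ψ(z) dz = 1. Define φ(x) = ∫_0^{|x|} ∫_0^y ψ(z) dz dy for x ∈ ℝ. Then for every x ∈ ℝ, 0 ≤ |x| − φ(x) ≤ b, and for every x the function φ is differentiable at x with |φ'(x)| ≤ 1. -/
open Real MeasureTheory intervalIntegral

/-- Let `0 < a < b` and let `ψ` be a nonnegative continuous function
vanishing outside `(a,b)` with total integral `1`. Define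
`φ(x) = ∫_0^{|x|} ∫_0^y ψ(z) dz dy`. Then `0 ≤ |x| − φ(x) ≤ b` for every `x`, and `φ` is
differentiable everywhere with derivative bounded by `1` in absolute value. -/
theorem abs_approx_properties
    (a b : ℝ) (ha : 0 < a) (hab : a < b)
    (ψ : ℝ → ℝ) (hcont : Continuous ψ) (hnn : ∀ z, 0 ≤ ψ z)
    (hsupp : ∀ z ∉ Set.Ioo a b, ψ z = 0)
    (hone : ∫ z, ψ z = 1)
    (φ : ℝ → ℝ) (hφ : ∀ x, φ x = ∫ y in (0 : ℝ)..|x|, ∫ z in (0 : ℝ)..y, ψ z) :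
    ∀ x : ℝ, (0 ≤ |x| - φ x ∧ |x| - φ x ≤ b) ∧
      ∃ D : ℝ, HasDerivAt φ D x ∧ |D| ≤ 1 := by
  have hψii : ∀ u v : ℝ, IntervalIntegrable ψ volume u v := fun u v =>
    hcont.intervalIntegrable u v
  have hψK : HasCompactSupport ψ :=
    HasCompactSupport.intro isCompact_Icc
      (fun z hz => hsupp z (fun h => hz ⟨h.1.le, h.2.le⟩))
  have hψint : Integrable ψ := hcont.integrable_of_hasCompactSupport hψK
  set g : ℝ → ℝ := fun y => ∫ z in (0:ℝ)..y, ψ z with hgdef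
  -- g vanishes below a
  have hg0 : ∀ y ≤ a, g y = 0 := by
    intro y hy
    have : Set.EqOn ψ 0 (Set.uIcc 0 y) := by
      intro z hz
      refine hsupp z (fun h2 => ?_)
      have hz2 : z ≤ max 0 y := hz.2
      have : z ≤ a := hz2.trans (max_le ha.le hy)
      exact absurd h2.1 (not_lt.mpr this)
    simpa using intervalIntegral.integral_congr this
  have hgnn : ∀ y, 0 ≤ g y := by
    intro y
    rcases le_or_gt y 0 with hy | hy
    · rw [hg0 y (hy.trans ha.le)]
    · exact intervalIntegral.integral_nonneg hy.le (fun z _ => hnn z)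
  have hgle1 : ∀ y, g y ≤ 1 := by
    intro y
    rcases le_or_gt y 0 with hy | hy
    · rw [hg0 y (hy.trans ha.le)]; norm_num
    · rw [hgdef]
      simp only
      rw [intervalIntegral.integral_of_le hy.le, ← hone]
      exact setIntegral_le_integral hψint (Filter.Eventually.of_forall hnn)
  have hg1 : ∀ y, b ≤ y → g y = 1 := by
    intro y hy
    rw [hgdef]
    simp only
    rw [intervalIntegral.integral_of_le ((ha.trans hab).le.trans hy), ← hone]
    refine setIntegral_eq_integral_of_forall_compl_eq_zero (fun z hz => ?_)
    refine hsupp z (fun h2 => hz ⟨ha.trans h2.1, (h2.2.le.trans hy)⟩)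
  have hgcont : Continuous g := intervalIntegral.continuous_primitive hψii 0
  have hgii : ∀ u v : ℝ, IntervalIntegrable g volume u v := fun u v =>
    hgcont.intervalIntegrable u v
  set G : ℝ → ℝ := fun x => ∫ y in (0:ℝ)..x, g y with hGdef
  have hG0 : ∀ x ≤ 0, G x = 0 := by
    intro x hx
    have : Set.EqOn g 0 (Set.uIcc 0 x) := by
      intro z hz
      have hz2 : z ≤ max 0 x := hz.2
      exact hg0 z (hz2.trans ((max_le le_rfl hx).trans ha.le))
    simpa using intervalIntegral.integral_congr this
  have hφeq : ∀ x, φ x = G x + G (-x) := by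
    intro x
    rcases le_or_gt 0 x with hx | hx
    · rw [hφ x, abs_of_nonneg hx, hG0 (-x) (neg_nonpos.mpr hx), add_zero]
    · rw [hφ x, abs_of_neg hx, hG0 x hx.le, zero_add]
  intro x
  constructor
  · -- bounds
    have hxnn : (0:ℝ) ≤ |x| := abs_nonneg x
    have key : |x| - φ x = ∫ y in (0:ℝ)..|x|, (1 - g y) := by
      rw [hφ x, intervalIntegral.integral_sub (_root_.intervalIntegrable_const) (hgii 0 |x|)]
      simp
    constructor
    · rw [key]
      exact intervalIntegral.integral_nonneg hxnn (fun y _ => sub_nonneg.mpr (hgle1 y))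
    · rw [key]
      rcases le_or_gt (|x|) b with hxb | hxb
      · calc ∫ y in (0:ℝ)..|x|, (1 - g y)
            ≤ ∫ _y in (0:ℝ)..|x|, (1:ℝ) := by
              refine intervalIntegral.integral_mono_on hxnn
                ((_root_.intervalIntegrable_const).sub (hgii 0 |x|)) _root_.intervalIntegrable_const
                (fun y _ => ?_)
              have := hgnn y; linarith
          _ = |x| := by simp
          _ ≤ b := hxb
      · have hsplit : (∫ y in (0:ℝ)..b, (1 - g y)) + (∫ y in b..|x|, (1 - g y))
            = ∫ y in (0:ℝ)..|x|, (1 - g y) :=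
          intervalIntegral.integral_add_adjacent_intervals
            ((_root_.intervalIntegrable_const).sub (hgii 0 b))
            ((_root_.intervalIntegrable_const).sub (hgii b |x|))
        have h2 : (∫ y in b..|x|, (1 - g y)) = 0 := by
          have : Set.EqOn (fun y => 1 - g y) 0 (Set.uIcc b |x|) := by
            intro z hz
            have : b ≤ z := le_trans (by simp [min_eq_left hxb.le]) hz.1
            simp [hg1 z this]
          simpa using intervalIntegral.integral_congr this
        rw [← hsplit, h2, add_zero]
        calc ∫ y in (0:ℝ)..b, (1 - g y)
            ≤ ∫ _y in (0:ℝ)..b, (1:ℝ) := by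
              refine intervalIntegral.integral_mono_on (ha.trans hab).le
                ((_root_.intervalIntegrable_const).sub (hgii 0 b)) _root_.intervalIntegrable_const
                (fun y _ => ?_)
              have := hgnn y; linarith
          _ = b := by simp
  · -- differentiability
    refine ⟨g x - g (-x), ?_, ?_⟩
    · have h1 : HasDerivAt G (g x) x :=
        (hgcont.integral_hasStrictDerivAt 0 x).hasDerivAt
      have h2 : HasDerivAt (fun x => G (-x)) (-(g (-x))) x := by
        have := ((hgcont.integral_hasStrictDerivAt 0 (-x)).hasDerivAt).comp x
          (hasDerivAt_neg x)
        simp only [mul_neg, mul_one] at this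
        exact this
      have := h1.add h2
      have heq : (fun x => G x + G (-x)) = φ := by
        funext y; rw [hφeq y]
      rw [show (G + fun x => G (-x)) = φ from heq] at this
      simpa [sub_eq_add_neg] using this
    · rcases le_or_gt 0 x with hx | hx
      · have : g (-x) = 0 := hg0 (-x) ((neg_nonpos.mpr hx).trans ha.le)
        rw [this, sub_zero, abs_of_nonneg (hgnn x)]
        exact hgle1 x
      · have : g x = 0 := hg0 x (hx.le.trans ha.le)
        rw [this, zero_sub, abs_neg, abs_of_nonneg (hgnn (-x))]
        exact hgle1 (-x)
end

section
/- Let d ≥ 1 and 0 < α < d. There exists a constant c = c(α,d) > 0 such that for all x, y ∈ ℝ^d and all t, t' > 0, ∫_{ℝ^d} ∫_{ℝ^d} p_t(x−w) p_{t'}(y−z) |w−z|^{-α} dw dz ≤ c (t+t')^{-α/2}. -/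
open Real MeasureTheory
open Metric Set
open scoped ENNReal

/-- The `d`-dimensional heat kernel `p_t(x) = (2πt)^{-d/2} exp(-|x|²/(2t))`. -/
noncomputable def heatKernel (d : ℕ) (t : ℝ) (x : EuclideanSpace ℝ (Fin d)) : ℝ :=
  (2 * Real.pi * t) ^ (-(d : ℝ) / 2) * Real.exp (-‖x‖ ^ 2 / (2 * t))

section Aux

variable {d : ℕ} {α : ℝ}

lemma heatKernel_nonneg (d : ℕ) {t : ℝ} (ht : 0 < t) (x : EuclideanSpace ℝ (Fin d)) :
    0 ≤ heatKernel d t x := by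
  unfold heatKernel; positivity

lemma heatKernel_measurable (d : ℕ) (t : ℝ) : Measurable (heatKernel d t) := by
  unfold heatKernel; fun_prop

lemma heatKernel_le (d : ℕ) {t : ℝ} (ht : 0 < t) (x : EuclideanSpace ℝ (Fin d)) :
    heatKernel d t x ≤ (2 * Real.pi * t) ^ (-(d : ℝ) / 2) := by
  unfold heatKernel
  have h1 : Real.exp (-‖x‖ ^ 2 / (2 * t)) ≤ 1 := by
    rw [Real.exp_le_one_iff, neg_div, neg_nonpos]
    positivity
  have h2 : (0:ℝ) ≤ (2 * Real.pi * t) ^ (-(d : ℝ) / 2) := by positivity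
  calc (2 * Real.pi * t) ^ (-(d : ℝ) / 2) * Real.exp (-‖x‖ ^ 2 / (2 * t))
      ≤ (2 * Real.pi * t) ^ (-(d : ℝ) / 2) * 1 := by gcongr
    _ = _ := mul_one _

lemma heatKernel_lintegral (d : ℕ) {t : ℝ} (ht : 0 < t) (u : EuclideanSpace ℝ (Fin d)) :
    ∫⁻ z : EuclideanSpace ℝ (Fin d), ENNReal.ofReal (heatKernel d t (u - z)) = 1 := by
  have hb : (0:ℝ) < 1 / (2 * t) := by positivity
  have hbπ : (0:ℝ) < 2 * Real.pi * t := by positivity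
  set f : EuclideanSpace ℝ (Fin d) → ℝ := fun v => Real.exp (-(1 / (2 * t)) * ‖v‖ ^ 2) with hf
  have hfeq : ∀ v : EuclideanSpace ℝ (Fin d), heatKernel d t v
      = (2 * Real.pi * t) ^ (-(d : ℝ) / 2) * f v := by
    intro v
    unfold heatKernel
    congr 1
    rw [hf]
    congr 1
    ring
  have hint : Integrable f := by
    have h := GaussianFourier.integrable_cexp_neg_mul_sq_norm_add
      (b := ((1 / (2 * t) : ℝ) : ℂ)) (by simpa using hb) 0 (0 : EuclideanSpace ℝ (Fin d))
    have h2 := h.norm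
    refine h2.congr (Filter.Eventually.of_forall fun v => ?_)
    show ‖Complex.exp _‖ = _
    rw [Complex.norm_exp, hf]
    congr 1
    simp only [Complex.add_re, Complex.mul_re, Complex.neg_re, Complex.ofReal_re,
      Complex.neg_im, Complex.ofReal_im, zero_mul, Complex.zero_re]
    have : ((‖v‖ : ℂ) ^ 2).re = ‖v‖ ^ 2 := by norm_cast
    have him : ((‖v‖ : ℂ) ^ 2).im = 0 := by norm_cast
    rw [this, him]
    ring
  have hval : ∫ v : EuclideanSpace ℝ (Fin d), f v = (2 * Real.pi * t) ^ ((d : ℝ) / 2) := by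
    have h := GaussianFourier.integral_rexp_neg_mul_sq_norm
      (V := EuclideanSpace ℝ (Fin d)) hb
    rw [hf]
    simp only [neg_mul] at h ⊢
    rw [h, finrank_euclideanSpace_fin]
    congr 1
    rw [one_div, div_inv_eq_mul]
    ring
  calc ∫⁻ z : EuclideanSpace ℝ (Fin d), ENNReal.ofReal (heatKernel d t (u - z))
      = ∫⁻ z : EuclideanSpace ℝ (Fin d),
          ENNReal.ofReal ((2 * Real.pi * t) ^ (-(d : ℝ) / 2)) * ENNReal.ofReal (f (u - z)) := by
        congr 1; ext z
        rw [hfeq, ENNReal.ofReal_mul (by positivity)]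
    _ = ENNReal.ofReal ((2 * Real.pi * t) ^ (-(d : ℝ) / 2)) *
          ∫⁻ z : EuclideanSpace ℝ (Fin d), ENNReal.ofReal (f (u - z)) := by
        rw [lintegral_const_mul' _ _ ENNReal.ofReal_ne_top]
    _ = ENNReal.ofReal ((2 * Real.pi * t) ^ (-(d : ℝ) / 2)) *
          ∫⁻ v : EuclideanSpace ℝ (Fin d), ENNReal.ofReal (f v) := by
        congr 1
        exact (Measure.measurePreserving_sub_left volume u).lintegral_comp
          (ENNReal.measurable_ofReal.comp (by fun_prop))
    _ = ENNReal.ofReal ((2 * Real.pi * t) ^ (-(d : ℝ) / 2)) *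
          ENNReal.ofReal ((2 * Real.pi * t) ^ ((d : ℝ) / 2)) := by
        rw [← ofReal_integral_eq_lintegral_ofReal hint
          (Filter.Eventually.of_forall fun v => by positivity), hval]
    _ = 1 := by
        rw [← ENNReal.ofReal_mul (by positivity), ← Real.rpow_add hbπ,
          show (-(d:ℝ)/2 + (d:ℝ)/2) = 0 by ring, Real.rpow_zero, ENNReal.ofReal_one]

lemma riesz_ball_one (hα0 : 0 < α) (hαd : α < d) :
    ∫⁻ v in ball (0 : EuclideanSpace ℝ (Fin d)) 1, ENNReal.ofReal (‖v‖ ^ (-α)) < ∞ := by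
  set μ := volume.restrict (ball (0 : EuclideanSpace ℝ (Fin d)) 1) with hμ
  have hmeas : Measurable fun v : EuclideanSpace ℝ (Fin d) => ‖v‖ ^ (-α) := by fun_prop
  have h0 : ∀ v : EuclideanSpace ℝ (Fin d), 0 ≤ ‖v‖ ^ (-α) :=
    fun v => Real.rpow_nonneg (norm_nonneg _) _
  rw [show (∫⁻ v in ball (0 : EuclideanSpace ℝ (Fin d)) 1, ENNReal.ofReal (‖v‖ ^ (-α)))
      = ∫⁻ v, ENNReal.ofReal (‖v‖ ^ (-α)) ∂μ from rfl,
    lintegral_eq_lintegral_meas_le μ (Filter.Eventually.of_forall h0) hmeas.aemeasurable]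
  have hsub : ∀ t : ℝ, 0 < t →
      {a : EuclideanSpace ℝ (Fin d) | t ≤ ‖a‖ ^ (-α)} ⊆ closedBall 0 (t ^ (-α⁻¹)) := by
    intro t ht a ha
    simp only [mem_setOf_eq] at ha
    have hane : a ≠ 0 := by
      rintro rfl
      rw [norm_zero, Real.zero_rpow (by linarith : -α ≠ 0)] at ha
      linarith
    have hnorm : 0 < ‖a‖ := norm_pos_iff.mpr hane
    rw [mem_closedBall, dist_zero_right]
    calc ‖a‖ = (‖a‖ ^ (-α)) ^ (-α⁻¹) := by
          rw [← Real.rpow_mul (norm_nonneg a), show -α * -α⁻¹ = 1 by field_simp]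
          exact (Real.rpow_one _).symm
      _ ≤ t ^ (-α⁻¹) := Real.rpow_le_rpow_of_nonpos ht ha (by
          rw [Left.neg_nonpos_iff]; positivity)
  have hF : ∀ t ∈ Ioi (1:ℝ), μ {a | t ≤ ‖a‖ ^ (-α)}
      ≤ ENNReal.ofReal (t ^ (-(α⁻¹ * d))) * volume (ball (0 : EuclideanSpace ℝ (Fin d)) 1) := by
    intro t ht
    have ht0 : (0:ℝ) < t := lt_trans one_pos ht
    have hr0 : (0:ℝ) ≤ t ^ (-α⁻¹) := Real.rpow_nonneg ht0.le _
    calc μ {a | t ≤ ‖a‖ ^ (-α)}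
        ≤ volume (closedBall (0 : EuclideanSpace ℝ (Fin d)) (t ^ (-α⁻¹))) :=
          le_trans (Measure.restrict_apply_le _ _) (measure_mono (hsub t ht0))
      _ = ENNReal.ofReal ((t ^ (-α⁻¹)) ^ (Module.finrank ℝ (EuclideanSpace ℝ (Fin d))))
            * volume (ball (0 : EuclideanSpace ℝ (Fin d)) 1) :=
          Measure.addHaar_closedBall _ _ hr0
      _ = ENNReal.ofReal (t ^ (-(α⁻¹ * d))) * volume (ball (0 : EuclideanSpace ℝ (Fin d)) 1) := by
          rw [finrank_euclideanSpace_fin, ← Real.rpow_natCast (t ^ (-α⁻¹)) d,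
            ← Real.rpow_mul ht0.le, show -α⁻¹ * (d:ℝ) = -(α⁻¹ * d) by ring]
  calc ∫⁻ t in Ioi 0, μ {a | t ≤ ‖a‖ ^ (-α)}
      ≤ ∫⁻ t in Ioc 0 1 ∪ Ioi 1, μ {a | t ≤ ‖a‖ ^ (-α)} :=
        lintegral_mono_set Ioi_subset_Ioc_union_Ioi
    _ ≤ (∫⁻ t in Ioc 0 1, μ {a | t ≤ ‖a‖ ^ (-α)}) + ∫⁻ t in Ioi 1, μ {a | t ≤ ‖a‖ ^ (-α)} :=
        lintegral_union_le _ _ _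
    _ < ∞ := by
        refine ENNReal.add_lt_top.2 ⟨?_, ?_⟩
        · calc (∫⁻ t in Ioc 0 1, μ {a | t ≤ ‖a‖ ^ (-α)})
              ≤ ∫⁻ _ in Ioc (0:ℝ) 1, volume (ball (0 : EuclideanSpace ℝ (Fin d)) 1) := by
                refine setLIntegral_mono' measurableSet_Ioc fun t _ => ?_
                exact le_trans (measure_mono (subset_univ _))
                  (by rw [hμ, Measure.restrict_apply_univ])
            _ < ∞ := by
                rw [setLIntegral_const]
                exact ENNReal.mul_lt_top measure_ball_lt_top (by simp)
        · calc (∫⁻ t in Ioi 1, μ {a | t ≤ ‖a‖ ^ (-α)})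
              ≤ ∫⁻ t in Ioi 1, ENNReal.ofReal (t ^ (-(α⁻¹ * d)))
                  * volume (ball (0 : EuclideanSpace ℝ (Fin d)) 1) :=
                setLIntegral_mono' measurableSet_Ioi hF
            _ = (∫⁻ t in Ioi 1, ENNReal.ofReal (t ^ (-(α⁻¹ * d))))
                  * volume (ball (0 : EuclideanSpace ℝ (Fin d)) 1) := by
                rw [lintegral_mul_const' _ _ measure_ball_lt_top.ne]
            _ < ∞ := by
                refine ENNReal.mul_lt_top ?_ measure_ball_lt_top
                have hint : IntegrableOn (fun t : ℝ => t ^ (-(α⁻¹ * d))) (Ioi 1) := by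
                  refine integrableOn_Ioi_rpow_of_lt ?_ one_pos
                  rw [neg_lt_neg_iff, show α⁻¹ * (d:ℝ) = d / α by ring,
                    lt_div_iff₀ hα0, one_mul]
                  exact hαd
                exact hint.setLIntegral_lt_top

lemma riesz_ball_scaled (hα0 : 0 < α) (hαd : α < d)
    {J : ℝ≥0∞} (hJ : (∫⁻ v in ball (0 : EuclideanSpace ℝ (Fin d)) 1,
      ENNReal.ofReal (‖v‖ ^ (-α))) = J) (hJfin : J < ∞) {R : ℝ} (hR : 0 < R) :
    ∫⁻ v in ball (0 : EuclideanSpace ℝ (Fin d)) R, ENNReal.ofReal (‖v‖ ^ (-α))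
      ≤ ENNReal.ofReal ((J.toReal + 1) * R ^ ((d:ℝ) - α)) := by
  set E := EuclideanSpace ℝ (Fin d)
  set g : E → ℝ≥0∞ := (ball (0 : E) 1).indicator (fun v => ENNReal.ofReal (‖v‖ ^ (-α))) with hg
  have hgmeas : Measurable g := by
    refine Measurable.indicator ?_ measurableSet_ball
    fun_prop
  have hinv : (R : ℝ)⁻¹ ≠ 0 := inv_ne_zero hR.ne'
  -- change of variables
  have key : ∫⁻ v : E, g (R⁻¹ • v) = ENNReal.ofReal (R ^ (d:ℕ)) * ∫⁻ v : E, g v := by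
    have hmap := Measure.map_addHaar_smul (volume : Measure E) hinv
    calc ∫⁻ v : E, g (R⁻¹ • v)
        = ∫⁻ y, g y ∂(Measure.map (fun v : E => R⁻¹ • v) volume) := by
          rw [lintegral_map hgmeas (measurable_const_smul _)]
      _ = ENNReal.ofReal |((R⁻¹ : ℝ) ^ Module.finrank ℝ E)⁻¹| * ∫⁻ v : E, g v := by
          rw [hmap]; simp [lintegral_smul_measure]
      _ = ENNReal.ofReal (R ^ (d:ℕ)) * ∫⁻ v : E, g v := by
          congr 2
          rw [finrank_euclideanSpace_fin, ← inv_pow, inv_inv, abs_of_pos (by positivity)]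
  -- compute LHS of key
  have hval : ∀ v : E, g (R⁻¹ • v)
      = (ball (0:E) R).indicator (fun v => ENNReal.ofReal (R ^ α * ‖v‖ ^ (-α))) v := by
    intro v
    have hmem : R⁻¹ • v ∈ ball (0:E) 1 ↔ v ∈ ball (0:E) R := by
      simp only [mem_ball, dist_zero_right, norm_smul, norm_inv, Real.norm_eq_abs,
        abs_of_pos hR]
      rw [inv_mul_lt_iff₀ hR, mul_one]
    have hnorm : ‖R⁻¹ • v‖ ^ (-α) = R ^ α * ‖v‖ ^ (-α) := by
      rw [norm_smul, norm_inv, Real.norm_eq_abs, abs_of_pos hR,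
        Real.mul_rpow (by positivity) (norm_nonneg v),
        ← Real.rpow_neg_one R, ← Real.rpow_mul hR.le, neg_one_mul, neg_neg]
    rw [hg]
    by_cases hv : v ∈ ball (0:E) R
    · rw [indicator_of_mem hv, indicator_of_mem (hmem.mpr hv), hnorm]
    · rw [indicator_of_notMem hv, indicator_of_notMem (fun h => hv (hmem.mp h))]
  have lhs_eq : ∫⁻ v : E, g (R⁻¹ • v)
      = ENNReal.ofReal (R ^ α) * ∫⁻ v in ball (0:E) R, ENNReal.ofReal (‖v‖ ^ (-α)) := by
    simp_rw [hval]
    rw [lintegral_indicator measurableSet_ball _]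
    have : ∀ v : E, ENNReal.ofReal (R ^ α * ‖v‖ ^ (-α))
        = ENNReal.ofReal (R ^ α) * ENNReal.ofReal (‖v‖ ^ (-α)) := fun v =>
      ENNReal.ofReal_mul (by positivity)
    simp_rw [this]
    rw [lintegral_const_mul' _ _ ENNReal.ofReal_ne_top]
  have rhs_eq : ∫⁻ v : E, g v = J := by
    rw [hg, lintegral_indicator measurableSet_ball _, hJ]
  rw [lhs_eq, rhs_eq] at key
  have ha0 : ENNReal.ofReal (R ^ α) ≠ 0 := by
    simp only [ne_eq, ENNReal.ofReal_eq_zero, not_le]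
    positivity
  have hBeq : ∫⁻ v in ball (0:E) R, ENNReal.ofReal (‖v‖ ^ (-α))
      = ENNReal.ofReal (R ^ ((d:ℝ) - α)) * J := by
    have := congrArg (fun q => (ENNReal.ofReal (R ^ α))⁻¹ * q) key
    rw [← mul_assoc, ENNReal.inv_mul_cancel ha0 ENNReal.ofReal_ne_top, one_mul] at this
    rw [this, ← mul_assoc]
    congr 1
    rw [← ENNReal.ofReal_inv_of_pos (by positivity), ← ENNReal.ofReal_mul (by positivity),
      ← Real.rpow_neg hR.le, ← Real.rpow_natCast R d, ← Real.rpow_add hR]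
    congr 1
    ring
  rw [hBeq]
  have hJle : J ≤ ENNReal.ofReal (J.toReal + 1) :=
    le_trans (le_of_eq (ENNReal.ofReal_toReal hJfin.ne).symm)
      (ENNReal.ofReal_le_ofReal (by linarith))
  calc ENNReal.ofReal (R ^ ((d:ℝ) - α)) * J
      ≤ ENNReal.ofReal (R ^ ((d:ℝ) - α)) * ENNReal.ofReal (J.toReal + 1) := by gcongr
    _ = ENNReal.ofReal ((J.toReal + 1) * R ^ ((d:ℝ) - α)) := by
        rw [← ENNReal.ofReal_mul (by positivity), mul_comm]

lemma riesz_ball_translate {r : ℝ} (w : EuclideanSpace ℝ (Fin d)) :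
    ∫⁻ z in ball w r, ENNReal.ofReal (‖w - z‖ ^ (-α))
      = ∫⁻ v in ball (0 : EuclideanSpace ℝ (Fin d)) r, ENNReal.ofReal (‖v‖ ^ (-α)) := by
  rw [← lintegral_indicator measurableSet_ball _, ← lintegral_indicator measurableSet_ball _]
  have hptwise : ∀ z, (ball w r).indicator
        (fun z => ENNReal.ofReal (‖w - z‖ ^ (-α))) z
      = (ball (0 : EuclideanSpace ℝ (Fin d)) r).indicator
        (fun v => ENNReal.ofReal (‖v‖ ^ (-α))) (w - z) := by
    intro z
    have hmem : z ∈ ball w r ↔ (w - z) ∈ ball (0 : EuclideanSpace ℝ (Fin d)) r := by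
      rw [mem_ball, mem_ball, dist_zero_right, dist_eq_norm, norm_sub_rev]
    by_cases hz : z ∈ ball w r
    · rw [indicator_of_mem hz, indicator_of_mem (hmem.mp hz)]
    · rw [indicator_of_notMem hz, indicator_of_notMem (fun h => hz (hmem.mpr h))]
  simp_rw [hptwise]
  exact (Measure.measurePreserving_sub_left volume w).lintegral_comp
    ((Measurable.indicator (by fun_prop) measurableSet_ball))

lemma kernel_estimate (hα0 : 0 < α) (hαd : α < d)
    {J : ℝ≥0∞} (hJ : (∫⁻ v in ball (0 : EuclideanSpace ℝ (Fin d)) 1,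
      ENNReal.ofReal (‖v‖ ^ (-α))) = J) (hJfin : J < ∞)
    {s : ℝ} (hs : 0 < s) (u w : EuclideanSpace ℝ (Fin d)) :
    ∫⁻ z : EuclideanSpace ℝ (Fin d),
        ENNReal.ofReal (heatKernel d s (u - z)) * ENNReal.ofReal (‖w - z‖ ^ (-α))
      ≤ ENNReal.ofReal (((2 * Real.pi) ^ (-(d:ℝ) / 2) * (J.toReal + 1) + 1) * s ^ (-α / 2)) := by
  set K := J.toReal + 1 with hK
  have hK0 : 0 < K := by
    rw [hK]; have := ENNReal.toReal_nonneg (a := J); linarith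
  set r : ℝ := s ^ ((1:ℝ) / 2) with hr
  have hr0 : 0 < r := Real.rpow_pos_of_pos hs _
  set F : EuclideanSpace ℝ (Fin d) → ℝ≥0∞ := fun z =>
    ENNReal.ofReal (heatKernel d s (u - z)) * ENNReal.ofReal (‖w - z‖ ^ (-α)) with hF
  rw [← lintegral_add_compl F (measurableSet_ball (x := w) (ε := r))]
  have piece1 : ∫⁻ z in ball w r, F z
      ≤ ENNReal.ofReal ((2 * Real.pi) ^ (-(d:ℝ) / 2) * K * s ^ (-α / 2)) := by
    have hb : ∀ z, F z ≤ ENNReal.ofReal ((2 * Real.pi * s) ^ (-(d:ℝ) / 2))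
        * ENNReal.ofReal (‖w - z‖ ^ (-α)) := by
      intro z
      exact mul_le_mul_left (ENNReal.ofReal_le_ofReal (heatKernel_le d hs _)) _
    calc ∫⁻ z in ball w r, F z
        ≤ ∫⁻ z in ball w r, ENNReal.ofReal ((2 * Real.pi * s) ^ (-(d:ℝ) / 2))
            * ENNReal.ofReal (‖w - z‖ ^ (-α)) := lintegral_mono hb
      _ = ENNReal.ofReal ((2 * Real.pi * s) ^ (-(d:ℝ) / 2))
            * ∫⁻ z in ball w r, ENNReal.ofReal (‖w - z‖ ^ (-α)) := by
          rw [lintegral_const_mul' _ _ ENNReal.ofReal_ne_top]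
      _ = ENNReal.ofReal ((2 * Real.pi * s) ^ (-(d:ℝ) / 2))
            * ∫⁻ v in ball (0 : EuclideanSpace ℝ (Fin d)) r, ENNReal.ofReal (‖v‖ ^ (-α)) := by
          rw [riesz_ball_translate]
      _ ≤ ENNReal.ofReal ((2 * Real.pi * s) ^ (-(d:ℝ) / 2))
            * ENNReal.ofReal (K * r ^ ((d:ℝ) - α)) := by
          gcongr
          exact riesz_ball_scaled hα0 hαd hJ hJfin hr0
      _ = ENNReal.ofReal ((2 * Real.pi) ^ (-(d:ℝ) / 2) * K * s ^ (-α / 2)) := by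
          rw [← ENNReal.ofReal_mul (by positivity)]
          congr 1
          have h2π : (0:ℝ) < 2 * Real.pi := by positivity
          rw [Real.mul_rpow h2π.le hs.le, hr, ← Real.rpow_mul hs.le]
          have hmul : s ^ (-(d:ℝ)/2) * s ^ ((1:ℝ)/2 * ((d:ℝ) - α)) = s ^ (-α/2) := by
            rw [← Real.rpow_add hs]; congr 1; ring
          linear_combination (2 * Real.pi) ^ (-(d:ℝ)/2) * K * hmul
  have piece2 : ∫⁻ z in (ball w r)ᶜ, F z ≤ ENNReal.ofReal (s ^ (-α / 2)) := by
    have hb : ∀ z ∈ (ball w r)ᶜ, F z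
        ≤ ENNReal.ofReal (heatKernel d s (u - z)) * ENNReal.ofReal (s ^ (-α / 2)) := by
      intro z hz
      refine mul_le_mul_right (ENNReal.ofReal_le_ofReal ?_) _
      have hge : r ≤ ‖w - z‖ := by
        rw [mem_compl_iff, mem_ball, not_lt, dist_eq_norm, norm_sub_rev] at hz
        exact hz
      calc ‖w - z‖ ^ (-α) ≤ r ^ (-α) :=
            Real.rpow_le_rpow_of_nonpos hr0 hge (by linarith)
        _ = s ^ (-α / 2) := by
            rw [hr, ← Real.rpow_mul hs.le]
            congr 1
            ring
    calc ∫⁻ z in (ball w r)ᶜ, F z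
        ≤ ∫⁻ z in (ball w r)ᶜ, ENNReal.ofReal (heatKernel d s (u - z))
            * ENNReal.ofReal (s ^ (-α / 2)) :=
          setLIntegral_mono' measurableSet_ball.compl hb
      _ = (∫⁻ z in (ball w r)ᶜ, ENNReal.ofReal (heatKernel d s (u - z)))
            * ENNReal.ofReal (s ^ (-α / 2)) := by
          rw [lintegral_mul_const' _ _ ENNReal.ofReal_ne_top]
      _ ≤ 1 * ENNReal.ofReal (s ^ (-α / 2)) := by
          gcongr
          rw [← heatKernel_lintegral d hs u]
          exact setLIntegral_le_lintegral _ _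
      _ = ENNReal.ofReal (s ^ (-α / 2)) := one_mul _
  calc (∫⁻ z in ball w r, F z) + ∫⁻ z in (ball w r)ᶜ, F z
      ≤ ENNReal.ofReal ((2 * Real.pi) ^ (-(d:ℝ) / 2) * K * s ^ (-α / 2))
        + ENNReal.ofReal (s ^ (-α / 2)) := add_le_add piece1 piece2
    _ = ENNReal.ofReal (((2 * Real.pi) ^ (-(d:ℝ) / 2) * K + 1) * s ^ (-α / 2)) := by
        rw [← ENNReal.ofReal_add (by positivity) (by positivity)]
        congr 1
        ring

end Aux

/-- For `0 < α < d` there is a constant `c = c(α,d) > 0` such that for all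
`x, y ∈ ℝ^d` and `t, t' > 0`,
`∫∫ p_t(x−w) p_{t'}(y−z) |w−z|^{-α} dw dz ≤ c (t+t')^{-α/2}`. -/
theorem heatKernel_double_convolution_riesz_bound
    (d : ℕ) (hd : 1 ≤ d) (α : ℝ) (hα0 : 0 < α) (hαd : α < d) :
    ∃ c : ℝ, 0 < c ∧ ∀ (x y : EuclideanSpace ℝ (Fin d)) (t t' : ℝ), 0 < t → 0 < t' →
      (∫ w : EuclideanSpace ℝ (Fin d), ∫ z : EuclideanSpace ℝ (Fin d),
          heatKernel d t (x - w) * heatKernel d t' (y - z) * ‖w - z‖ ^ (-α))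
        ≤ c * (t + t') ^ (-α / 2) := by
  set J : ℝ≥0∞ := ∫⁻ v in ball (0 : EuclideanSpace ℝ (Fin d)) 1,
    ENNReal.ofReal (‖v‖ ^ (-α)) with hJ
  have hJfin : J < ∞ := riesz_ball_one hα0 hαd
  set C : ℝ := (2 * Real.pi) ^ (-(d:ℝ) / 2) * (J.toReal + 1) + 1 with hC
  have hC0 : 0 < C := by
    rw [hC]
    have h1 : (0:ℝ) < (2 * Real.pi) ^ (-(d:ℝ) / 2) := by positivity
    have h2 : (0:ℝ) ≤ J.toReal := ENNReal.toReal_nonneg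
    nlinarith
  refine ⟨C * 2 ^ (α / 2), by positivity, ?_⟩
  intro x y t t' ht ht'
  have hc0 : (0:ℝ) < C * 2 ^ (α / 2) := by positivity
  have hRHS0 : (0:ℝ) ≤ C * 2 ^ (α / 2) * (t + t') ^ (-α / 2) := by positivity
  -- nonnegativity of integrand
  have hnn : ∀ w z : EuclideanSpace ℝ (Fin d),
      0 ≤ heatKernel d t (x - w) * heatKernel d t' (y - z) * ‖w - z‖ ^ (-α) :=
    fun w z => mul_nonneg (mul_nonneg (heatKernel_nonneg d ht _)
      (heatKernel_nonneg d ht' _)) (Real.rpow_nonneg (norm_nonneg _) _)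
  -- the ENNReal-valued integrand
  set Φ : EuclideanSpace ℝ (Fin d) → EuclideanSpace ℝ (Fin d) → ℝ≥0∞ := fun w z =>
    ENNReal.ofReal (heatKernel d t (x - w)) * ENNReal.ofReal (heatKernel d t' (y - z))
      * ENNReal.ofReal (‖w - z‖ ^ (-α)) with hΦ
  have hΦmeas : Measurable (Function.uncurry Φ) := by
    show Measurable ((fun p : EuclideanSpace ℝ (Fin d) × EuclideanSpace ℝ (Fin d) =>
      ENNReal.ofReal (heatKernel d t (x - p.1))) * (fun p => ENNReal.ofReal (heatKernel d t' (y - p.2)))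
        * fun p => ENNReal.ofReal (‖p.1 - p.2‖ ^ (-α)))
    apply Measurable.mul
    apply Measurable.mul
    · exact ENNReal.measurable_ofReal.comp
        ((heatKernel_measurable d t).comp (measurable_const.sub measurable_fst))
    · exact ENNReal.measurable_ofReal.comp
        ((heatKernel_measurable d t').comp (measurable_const.sub measurable_snd))
    · exact ENNReal.measurable_ofReal.comp
        ((measurable_fst.sub measurable_snd).norm.pow measurable_const)
  -- bound 1 : integrate z first
  have bound1 : ∫⁻ w, ∫⁻ z, Φ w z ≤ ENNReal.ofReal (C * t' ^ (-α / 2)) := by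
    have inner : ∀ w, ∫⁻ z, Φ w z ≤ ENNReal.ofReal (heatKernel d t (x - w))
        * ENNReal.ofReal (C * t' ^ (-α / 2)) := by
      intro w
      have : ∀ z, Φ w z = ENNReal.ofReal (heatKernel d t (x - w)) *
          (ENNReal.ofReal (heatKernel d t' (y - z)) * ENNReal.ofReal (‖w - z‖ ^ (-α))) :=
        fun z => by simp only [hΦ]; rw [mul_assoc]
      simp_rw [this]
      rw [lintegral_const_mul' _ _ ENNReal.ofReal_ne_top]
      exact mul_le_mul_right (kernel_estimate hα0 hαd hJ.symm hJfin ht' y w) _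
    calc ∫⁻ w, ∫⁻ z, Φ w z
        ≤ ∫⁻ w, ENNReal.ofReal (heatKernel d t (x - w))
            * ENNReal.ofReal (C * t' ^ (-α / 2)) := lintegral_mono inner
      _ = (∫⁻ w, ENNReal.ofReal (heatKernel d t (x - w)))
            * ENNReal.ofReal (C * t' ^ (-α / 2)) := by
          rw [lintegral_mul_const' _ _ ENNReal.ofReal_ne_top]
      _ = ENNReal.ofReal (C * t' ^ (-α / 2)) := by
          rw [heatKernel_lintegral d ht x, one_mul]
  -- bound 2 : swap and integrate w first
  have bound2 : ∫⁻ w, ∫⁻ z, Φ w z ≤ ENNReal.ofReal (C * t ^ (-α / 2)) := by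
    rw [lintegral_lintegral_swap hΦmeas.aemeasurable]
    have inner : ∀ z, ∫⁻ w, Φ w z ≤ ENNReal.ofReal (heatKernel d t' (y - z))
        * ENNReal.ofReal (C * t ^ (-α / 2)) := by
      intro z
      have : ∀ w, Φ w z = ENNReal.ofReal (heatKernel d t' (y - z)) *
          (ENNReal.ofReal (heatKernel d t (x - w)) * ENNReal.ofReal (‖z - w‖ ^ (-α))) :=
        fun w => by simp only [hΦ]; rw [norm_sub_rev]; ring
      simp_rw [this]
      rw [lintegral_const_mul' _ _ ENNReal.ofReal_ne_top]
      exact mul_le_mul_right (kernel_estimate hα0 hαd hJ.symm hJfin ht x z) _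
    calc ∫⁻ z, ∫⁻ w, Φ w z
        ≤ ∫⁻ z, ENNReal.ofReal (heatKernel d t' (y - z))
            * ENNReal.ofReal (C * t ^ (-α / 2)) := lintegral_mono inner
      _ = (∫⁻ z, ENNReal.ofReal (heatKernel d t' (y - z)))
            * ENNReal.ofReal (C * t ^ (-α / 2)) := by
          rw [lintegral_mul_const' _ _ ENNReal.ofReal_ne_top]
      _ = ENNReal.ofReal (C * t ^ (-α / 2)) := by
          rw [heatKernel_lintegral d ht' y, one_mul]
  -- combine: min bound
  have hmin : ∫⁻ w, ∫⁻ z, Φ w z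
      ≤ ENNReal.ofReal (C * 2 ^ (α / 2) * (t + t') ^ (-α / 2)) := by
    rcases le_total t t' with h | h
    · refine le_trans bound1 (ENNReal.ofReal_le_ofReal ?_)
      rw [mul_assoc]
      refine mul_le_mul_of_nonneg_left ?_ hC0.le
      have h1 : (t + t') / 2 ≤ t' := by linarith
      have h2 : (0:ℝ) < (t + t') / 2 := by linarith
      calc t' ^ (-α / 2) ≤ ((t + t') / 2) ^ (-α / 2) :=
            Real.rpow_le_rpow_of_nonpos h2 h1 (by linarith [div_nonneg hα0.le (zero_le_two (α := ℝ))])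
        _ = 2 ^ (α / 2) * (t + t') ^ (-α / 2) := by
            rw [Real.div_rpow (by linarith) (by norm_num), div_eq_mul_inv,
              ← Real.rpow_neg (by norm_num : (0:ℝ) ≤ 2), mul_comm,
              show -(-α / 2) = α / 2 by ring]
    · refine le_trans bound2 (ENNReal.ofReal_le_ofReal ?_)
      rw [mul_assoc]
      refine mul_le_mul_of_nonneg_left ?_ hC0.le
      have h1 : (t + t') / 2 ≤ t := by linarith
      have h2 : (0:ℝ) < (t + t') / 2 := by linarith
      calc t ^ (-α / 2) ≤ ((t + t') / 2) ^ (-α / 2) :=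
            Real.rpow_le_rpow_of_nonpos h2 h1 (by linarith [div_nonneg hα0.le (zero_le_two (α := ℝ))])
        _ = 2 ^ (α / 2) * (t + t') ^ (-α / 2) := by
            rw [Real.div_rpow (by linarith) (by norm_num), div_eq_mul_inv,
              ← Real.rpow_neg (by norm_num : (0:ℝ) ≤ 2), mul_comm,
              show -(-α / 2) = α / 2 by ring]
  -- now reduce the Bochner integral to the lintegral
  have hofReal : ∀ w z : EuclideanSpace ℝ (Fin d),
      ENNReal.ofReal (heatKernel d t (x - w) * heatKernel d t' (y - z) * ‖w - z‖ ^ (-α))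
        = Φ w z := by
    intro w z
    simp only [hΦ]
    rw [ENNReal.ofReal_mul (mul_nonneg (heatKernel_nonneg d ht _)
      (heatKernel_nonneg d ht' _)), ENNReal.ofReal_mul (heatKernel_nonneg d ht _)]
  have hinner_le : ∀ w : EuclideanSpace ℝ (Fin d),
      ENNReal.ofReal (∫ z, heatKernel d t (x - w) * heatKernel d t' (y - z) * ‖w - z‖ ^ (-α))
        ≤ ∫⁻ z, Φ w z := by
    intro w
    by_cases hm : AEStronglyMeasurable
        (fun z : EuclideanSpace ℝ (Fin d) =>
          heatKernel d t (x - w) * heatKernel d t' (y - z) * ‖w - z‖ ^ (-α)) volume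
    · rw [integral_eq_lintegral_of_nonneg_ae (Filter.Eventually.of_forall (hnn w)) hm]
      simp_rw [hofReal w]
      exact ENNReal.ofReal_toReal_le
    · rw [integral_undef (fun h => hm h.aestronglyMeasurable)]
      simp
  by_cases hm : AEStronglyMeasurable
      (fun w : EuclideanSpace ℝ (Fin d) => ∫ z : EuclideanSpace ℝ (Fin d),
        heatKernel d t (x - w) * heatKernel d t' (y - z) * ‖w - z‖ ^ (-α)) volume
  · rw [integral_eq_lintegral_of_nonneg_ae
      (Filter.Eventually.of_forall (fun w => integral_nonneg (hnn w))) hm]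
    refine ENNReal.toReal_le_of_le_ofReal hRHS0 ?_
    refine le_trans (lintegral_mono (fun w => hinner_le w)) hmin
  · rw [integral_undef (fun h => hm h.aestronglyMeasurable)]
    positivity
end

section
/- Let d ≥ 1. There exists a constant c = c(d) > 0 such that for every 0 < β ≤ 1, every λ' ≥ 0, all x, y ∈ ℝ^d, and all 0 < t ≤ t', ∫_{ℝ^d} |p_t(x−w) − p_{t'}(y−w)| e^{λ'|w|} dw ≤ c e^{2(λ')² t'} (e^{λ'|x|} + e^{λ'|y|}) e^{2βλ'|x−y|} ( t^{-β/2} |x−y|^β + t^{-β} (t'−t)^β ). -/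
set_option maxHeartbeats 1000000


open Real MeasureTheory

namespace HKAux

variable {d : ℕ}

local notation "E" => EuclideanSpace ℝ (Fin d)

lemma exp_neg_sub_le_of_le {u v : ℝ} (h : v ≤ u) :
    rexp (-v) - rexp (-u) ≤ (u - v) * rexp (-v) := by
  have h2 : rexp (-u) = rexp (-v) * rexp (v - u) := by
    rw [← Real.exp_add]; ring_nf
  have h1 := Real.add_one_le_exp (v - u)
  nlinarith [Real.exp_pos (-v)]

lemma abs_exp_neg_sub_le (u v : ℝ) :
    |rexp (-u) - rexp (-v)| ≤ |u - v| * (rexp (-u) + rexp (-v)) := by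
  rcases le_total u v with h | h
  · rw [abs_of_nonneg (sub_nonneg.2 (Real.exp_le_exp.2 (neg_le_neg h))),
      abs_of_nonpos (sub_nonpos.2 h)]
    have h1 := exp_neg_sub_le_of_le h
    nlinarith [Real.exp_pos (-u), Real.exp_pos (-v)]
  · rw [abs_of_nonpos (sub_nonpos.2 (Real.exp_le_exp.2 (neg_le_neg h))),
      abs_of_nonneg (sub_nonneg.2 h)]
    have h1 := exp_neg_sub_le_of_le h
    nlinarith [Real.exp_pos (-u), Real.exp_pos (-v)]

lemma one_sub_pow_le (n : ℕ) {r : ℝ} (h0 : 0 ≤ r) (h1 : r ≤ 1) :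
    1 - r ^ n ≤ n * (1 - r) := by
  induction n with
  | zero => simp
  | succ n ih =>
    have hr : r ^ n ≤ 1 := pow_le_one₀ h0 h1
    have hr0 : 0 ≤ r ^ n := pow_nonneg h0 n
    push_cast
    rw [pow_succ]
    nlinarith

lemma linear_absorb {a c : ℝ} (ha : 0 ≤ a) (hc : 0 < c) :
    a * rexp (-(a ^ 2 / (4 * c))) ≤ 3 * Real.sqrt c * rexp (-(a ^ 2 / (8 * c))) := by
  have hs : 0 < Real.sqrt c := Real.sqrt_pos.2 hc
  have hs2 : Real.sqrt c ^ 2 = c := Real.sq_sqrt hc.le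
  have key : a ≤ 3 * Real.sqrt c * rexp (a ^ 2 / (8 * c)) := by
    have h1 : a ^ 2 / (8 * c) + 1 ≤ rexp (a ^ 2 / (8 * c)) := Real.add_one_le_exp _
    have h1' : a ^ 2 + 8 * c ≤ 8 * c * rexp (a ^ 2 / (8 * c)) := by
      have h2 : a ^ 2 + 8 * c = 8 * c * (a ^ 2 / (8 * c) + 1) := by field_simp
      rw [h2]
      have := mul_le_mul_of_nonneg_left h1 (by positivity : (0:ℝ) ≤ 8 * c)
      linarith
    nlinarith [sq_nonneg (a - 2 * Real.sqrt c), Real.exp_pos (a ^ 2 / (8 * c))]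
  calc a * rexp (-(a ^ 2 / (4 * c)))
      ≤ 3 * Real.sqrt c * rexp (a ^ 2 / (8 * c)) * rexp (-(a ^ 2 / (4 * c))) :=
        mul_le_mul_of_nonneg_right key (Real.exp_nonneg _)
    _ = 3 * Real.sqrt c * rexp (a ^ 2 / (8 * c) + -(a ^ 2 / (4 * c))) := by
        rw [Real.exp_add]; ring
    _ = 3 * Real.sqrt c * rexp (-(a ^ 2 / (8 * c))) := by
        congr 1; congr 1; field_simp; ring

lemma sq_absorb {a c : ℝ} (hc : 0 < c) :
    a ^ 2 * rexp (-(a ^ 2 / (4 * c))) ≤ 8 * c * rexp (-(a ^ 2 / (8 * c))) := by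
  have key : a ^ 2 ≤ 8 * c * rexp (a ^ 2 / (8 * c)) := by
    have h1 : a ^ 2 / (8 * c) + 1 ≤ rexp (a ^ 2 / (8 * c)) := Real.add_one_le_exp _
    have h2 : a ^ 2 + 8 * c = 8 * c * (a ^ 2 / (8 * c) + 1) := by field_simp
    nlinarith [mul_le_mul_of_nonneg_left h1 (by positivity : (0:ℝ) ≤ 8 * c)]
  calc a ^ 2 * rexp (-(a ^ 2 / (4 * c)))
      ≤ 8 * c * rexp (a ^ 2 / (8 * c)) * rexp (-(a ^ 2 / (4 * c))) :=
        mul_le_mul_of_nonneg_right key (Real.exp_nonneg _)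
    _ = 8 * c * rexp (a ^ 2 / (8 * c) + -(a ^ 2 / (4 * c))) := by
        rw [Real.exp_add]; ring
    _ = 8 * c * rexp (-(a ^ 2 / (8 * c))) := by
        congr 1; congr 1; field_simp; ring

/-- Gaussian weight estimate absorbing the exponential factor `e^{lam ‖w‖}`. -/
lemma hk_mul_exp_le {t lam : ℝ} (ht : 0 < t) (hlam : 0 ≤ lam) (x w : E) :
    heatKernel d t (x - w) * rexp (lam * ‖w‖) ≤
      rexp (lam ^ 2 * t + lam * ‖x‖) *
        ((2 * π * t) ^ (-(d : ℝ) / 2) * rexp (-(‖x - w‖ ^ 2 / (4 * t)))) := by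
  have hpref : (0:ℝ) ≤ (2 * π * t) ^ (-(d : ℝ) / 2) :=
    Real.rpow_nonneg (by positivity) _
  have hnorm : ‖w‖ ≤ ‖x‖ + ‖x - w‖ := by
    calc ‖w‖ = ‖x - (x - w)‖ := by rw [sub_sub_cancel]
      _ ≤ ‖x‖ + ‖x - w‖ := norm_sub_le _ _
  have h1 : lam * ‖x - w‖ ≤ lam ^ 2 * t + ‖x - w‖ ^ 2 / (4 * t) := by
    have hid : lam ^ 2 * t + ‖x - w‖ ^ 2 / (4 * t) - lam * ‖x - w‖
        = (2 * lam * t - ‖x - w‖) ^ 2 / (4 * t) := by field_simp; ring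
    rw [← sub_nonneg, hid]
    positivity
  have key : -‖x - w‖ ^ 2 / (2 * t) + lam * ‖w‖
      ≤ lam ^ 2 * t + lam * ‖x‖ + -(‖x - w‖ ^ 2 / (4 * t)) := by
    have h2 : ‖x - w‖ ^ 2 / (4 * t) - ‖x - w‖ ^ 2 / (2 * t) = -(‖x - w‖ ^ 2 / (4 * t)) := by
      field_simp; ring
    have h3 := mul_le_mul_of_nonneg_left hnorm hlam
    have h4 : -‖x - w‖ ^ 2 / (2 * t) = -(‖x - w‖ ^ 2 / (2 * t)) := by ring
    nlinarith
  calc heatKernel d t (x - w) * rexp (lam * ‖w‖)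
      = (2 * π * t) ^ (-(d : ℝ) / 2) * rexp (-‖x - w‖ ^ 2 / (2 * t) + lam * ‖w‖) := by
        simp only [heatKernel]; rw [mul_assoc, ← Real.exp_add]
    _ ≤ (2 * π * t) ^ (-(d : ℝ) / 2) *
        rexp (lam ^ 2 * t + lam * ‖x‖ + -(‖x - w‖ ^ 2 / (4 * t))) := by
        gcongr
    _ = rexp (lam ^ 2 * t + lam * ‖x‖) *
        ((2 * π * t) ^ (-(d : ℝ) / 2) * rexp (-(‖x - w‖ ^ 2 / (4 * t)))) := by
        rw [Real.exp_add]; ring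

lemma hk_space_diff {t : ℝ} (ht : 0 < t) (x y w : E) :
    |heatKernel d t (x - w) - heatKernel d t (y - w)| ≤
      ‖x - y‖ / (2 * t) * ((‖x - w‖ + ‖y - w‖) *
        (heatKernel d t (x - w) + heatKernel d t (y - w))) := by
  simp only [heatKernel, neg_div]
  set p := (2 * π * t) ^ (-((d:ℝ) / 2)) with hp
  have hp0 : 0 ≤ p := Real.rpow_nonneg (by positivity) _
  set a := ‖x - w‖ with ha
  set b := ‖y - w‖ with hb
  have ha0 : 0 ≤ a := norm_nonneg _
  have hb0 : 0 ≤ b := norm_nonneg _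
  have h3 : |a - b| ≤ ‖x - y‖ := by
    have h := abs_norm_sub_norm_le (x - w) (y - w)
    rw [sub_sub_sub_cancel_right] at h
    exact h
  have h2 : |a ^ 2 / (2 * t) - b ^ 2 / (2 * t)| ≤ ‖x - y‖ * (a + b) / (2 * t) := by
    rw [div_sub_div_same, abs_div, abs_of_pos (by positivity : (0:ℝ) < 2 * t)]
    gcongr
    calc |a ^ 2 - b ^ 2| = |a - b| * (a + b) := by
          rw [← abs_of_nonneg (by positivity : (0:ℝ) ≤ a + b), ← abs_mul]
          congr 1; ring
      _ ≤ ‖x - y‖ * (a + b) := by gcongr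
  have h1 := abs_exp_neg_sub_le (a ^ 2 / (2 * t)) (b ^ 2 / (2 * t))
  calc |p * rexp (-(a ^ 2 / (2 * t))) - p * rexp (-(b ^ 2 / (2 * t)))|
      = p * |rexp (-(a ^ 2 / (2 * t))) - rexp (-(b ^ 2 / (2 * t)))| := by
        rw [← mul_sub, abs_mul, abs_of_nonneg hp0]
    _ ≤ p * (|a ^ 2 / (2 * t) - b ^ 2 / (2 * t)| *
          (rexp (-(a ^ 2 / (2 * t))) + rexp (-(b ^ 2 / (2 * t))))) := by gcongr
    _ ≤ p * (‖x - y‖ * (a + b) / (2 * t) *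
          (rexp (-(a ^ 2 / (2 * t))) + rexp (-(b ^ 2 / (2 * t))))) := by gcongr
    _ = ‖x - y‖ / (2 * t) * ((a + b) *
          (p * rexp (-(a ^ 2 / (2 * t))) + p * rexp (-(b ^ 2 / (2 * t))))) := by ring

lemma hk_time_diff {t t' : ℝ} (ht : 0 < t) (htt' : t ≤ t') (y w : E) :
    |heatKernel d t (y - w) - heatKernel d t' (y - w)| ≤
      (d : ℝ) * ((t' - t) / t) * heatKernel d t (y - w)
      + (t' - t) / (2 * t * t') * (‖y - w‖ ^ 2 * heatKernel d t' (y - w)) := by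
  have ht' : 0 < t' := lt_of_lt_of_le ht htt'
  simp only [heatKernel, neg_div]
  set a := ‖y - w‖ with ha
  set p := (2 * π * t) ^ (-((d:ℝ) / 2)) with hpdef
  set p' := (2 * π * t') ^ (-((d:ℝ) / 2)) with hp'def
  have hp0 : 0 ≤ p := Real.rpow_nonneg (by positivity) _
  have hp'0 : 0 ≤ p' := Real.rpow_nonneg (by positivity) _
  set X := rexp (-(a ^ 2 / (2 * t))) with hX
  set Y := rexp (-(a ^ 2 / (2 * t'))) with hY
  have hdd : a ^ 2 / (2 * t') ≤ a ^ 2 / (2 * t) :=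
    div_le_div_of_nonneg_left (sq_nonneg a) (by positivity) (by linarith)
  have hXY : X ≤ Y := by
    apply Real.exp_le_exp.2
    linarith
  have hX0 : 0 ≤ X := Real.exp_nonneg _
  have hY0 : 0 < Y := Real.exp_pos _
  -- prefactor comparison
  have hr0 : 0 < t / t' := by positivity
  have hr1 : t / t' ≤ 1 := by rw [div_le_one ht']; exact htt'
  have hrr : p' = p * (t / t') ^ ((d:ℝ) / 2) := by
    rw [hpdef, hp'def, Real.rpow_neg (by positivity), Real.rpow_neg (by positivity),
      ← Real.inv_rpow (by positivity), ← Real.inv_rpow (by positivity),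
      ← Real.mul_rpow (by positivity) hr0.le]
    congr 1
    field_simp
  have hpp' : p' ≤ p := by
    rw [hrr]
    calc p * (t / t') ^ ((d:ℝ) / 2) ≤ p * 1 := by
          gcongr
          exact Real.rpow_le_one hr0.le hr1 (by positivity)
      _ = p := mul_one p
  have key1 : p - p' ≤ (d : ℝ) * ((t' - t) / t) * p := by
    have hb1 : (t / t') ^ ((d:ℝ)) ≤ (t / t') ^ ((d:ℝ) / 2) :=
      Real.rpow_le_rpow_of_exponent_ge hr0 hr1 (half_le_self (Nat.cast_nonneg d))
    have hb2 : (t / t') ^ ((d:ℝ)) = (t / t') ^ (d : ℕ) := Real.rpow_natCast _ d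
    have hb3 : 1 - (t / t') ^ (d : ℕ) ≤ (d : ℝ) * (1 - t / t') :=
      one_sub_pow_le d hr0.le hr1
    have hb4 : 1 - t / t' = (t' - t) / t' := by field_simp
    have hb5 : (t' - t) / t' ≤ (t' - t) / t :=
      div_le_div_of_nonneg_left (by linarith) ht htt'
    have hp1 : p - p' = p * (1 - (t / t') ^ ((d:ℝ) / 2)) := by rw [hrr]; ring
    rw [hp1]
    have hb6 : 1 - (t / t') ^ ((d:ℝ) / 2) ≤ (d : ℝ) * ((t' - t) / t) := by
      rw [hb2] at hb1
      have : (d : ℝ) * (1 - t / t') ≤ (d : ℝ) * ((t' - t) / t) := by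
        rw [hb4]
        exact mul_le_mul_of_nonneg_left hb5 (Nat.cast_nonneg d)
      linarith
    calc p * (1 - (t / t') ^ ((d:ℝ) / 2)) ≤ p * ((d : ℝ) * ((t' - t) / t)) :=
          mul_le_mul_of_nonneg_left hb6 hp0
      _ = (d : ℝ) * ((t' - t) / t) * p := by ring
  have key2 : Y - X ≤ a ^ 2 * (t' - t) / (2 * t * t') * Y := by
    have h := exp_neg_sub_le_of_le hdd
    rw [← hY, ← hX] at h
    have hid : a ^ 2 / (2 * t) - a ^ 2 / (2 * t') = a ^ 2 * (t' - t) / (2 * t * t') := by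
      field_simp
    rw [hid] at h
    exact h
  have hsplit : |p * X - p' * Y| ≤ (p - p') * X + p' * (Y - X) := by
    have hrw : p * X - p' * Y = (p - p') * X - p' * (Y - X) := by ring
    rw [hrw]
    calc |(p - p') * X - p' * (Y - X)| ≤ |(p - p') * X| + |p' * (Y - X)| := abs_sub _ _
      _ = (p - p') * X + p' * (Y - X) := by
          rw [abs_of_nonneg (mul_nonneg (by linarith) hX0),
            abs_of_nonneg (mul_nonneg hp'0 (by linarith))]
  calc |p * X - p' * Y| ≤ (p - p') * X + p' * (Y - X) := hsplit
    _ ≤ ((d : ℝ) * ((t' - t) / t) * p) * X + p' * (a ^ 2 * (t' - t) / (2 * t * t') * Y) := by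
        gcongr
    _ = (d : ℝ) * ((t' - t) / t) * (p * X) + (t' - t) / (2 * t * t') * (a ^ 2 * (p' * Y)) := by
        ring

lemma integrable_gauss_norm {s : ℝ} (hs : 0 < s) :
    Integrable (fun v : E ↦ rexp (-(1 / (8 * s)) * ‖v‖ ^ 2)) := by
  have hb : (0:ℝ) < 1 / (8 * s) := by positivity
  have h := (GaussianFourier.integrable_cexp_neg_mul_sq_norm_add
    (V := EuclideanSpace ℝ (Fin d)) (b := ((1 / (8 * s) : ℝ) : ℂ))
    (by simpa using hb) 0 0).norm
  have heq : (fun v : E ↦ rexp (-(1 / (8 * s)) * ‖v‖ ^ 2)) =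
      fun v : E ↦ ‖Complex.exp (-((1 / (8 * s) : ℝ) : ℂ) * (‖v‖ : ℂ) ^ 2 +
        0 * ((inner ℝ (0 : E) v : ℝ) : ℂ))‖ := by
    funext v
    rw [Complex.norm_exp]
    have : (‖v‖ : ℂ) ^ 2 = ((‖v‖ ^ 2 : ℝ) : ℂ) := by push_cast; ring
    rw [this]
    simp [Complex.add_re, Complex.mul_re, Complex.ofReal_re, Complex.ofReal_im]
    left
    rw [← Complex.ofReal_pow, Complex.ofReal_re]
  rw [heq]
  exact h

lemma integrable_gauss {s : ℝ} (hs : 0 < s) (x0 : E) :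
    Integrable (fun w : E ↦ rexp (-(‖x0 - w‖ ^ 2 / (8 * s)))) := by
  have h := (integrable_gauss_norm (d := d) hs).comp_sub_left x0
  have heq : (fun w : E ↦ rexp (-(‖x0 - w‖ ^ 2 / (8 * s)))) =
      fun w : E ↦ rexp (-(1 / (8 * s)) * ‖x0 - w‖ ^ 2) := by
    funext w; congr 1; ring
  rw [heq]
  exact h

lemma integral_gauss {s : ℝ} (hs : 0 < s) (x0 : E) :
    ∫ w : E, rexp (-(‖x0 - w‖ ^ 2 / (8 * s))) = (8 * π * s) ^ ((d:ℝ) / 2) := by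
  have hb : (0:ℝ) < 1 / (8 * s) := by positivity
  have heq : (fun w : E ↦ rexp (-(‖x0 - w‖ ^ 2 / (8 * s)))) =
      fun w : E ↦ rexp (-(1 / (8 * s)) * ‖x0 - w‖ ^ 2) := by
    funext w; congr 1; ring
  rw [heq, integral_sub_left_eq_self (fun v : E ↦ rexp (-(1 / (8 * s)) * ‖v‖ ^ 2)) volume x0,
    GaussianFourier.integral_rexp_neg_mul_sq_norm hb, finrank_euclideanSpace_fin]
  congr 1
  field_simp

lemma hk_nonneg {t : ℝ} (ht : 0 < t) (z : E) : 0 ≤ heatKernel d t z := by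
  simp only [heatKernel]
  have : (0:ℝ) ≤ (2 * π * t) ^ (-(d : ℝ) / 2) := Real.rpow_nonneg (by positivity) _
  positivity

lemma prefactor_mul {s : ℝ} (hs : 0 < s) :
    (2 * π * s) ^ (-(d : ℝ) / 2) * (8 * π * s) ^ ((d : ℝ) / 2) = 4 ^ ((d : ℝ) / 2) := by
  have h8 : (8 * π * s) = 4 * (2 * π * s) := by ring
  have hpos : (0:ℝ) < 2 * π * s := by positivity
  rw [h8, Real.mul_rpow (by norm_num) hpos.le, neg_div, Real.rpow_neg hpos.le]
  have hne : (2 * π * s) ^ ((d:ℝ) / 2) ≠ 0 := ne_of_gt (Real.rpow_pos_of_pos hpos _)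
  field_simp

/-- Trivial (triangle inequality) bound. -/
lemma integral_bound_A {t t' lam : ℝ} (ht : 0 < t) (htt' : t ≤ t') (hlam : 0 ≤ lam)
    (x y : E) :
    (∫ w : E, |heatKernel d t (x - w) - heatKernel d t' (y - w)| * rexp (lam * ‖w‖))
      ≤ 4 ^ ((d:ℝ) / 2) * rexp (lam ^ 2 * t') *
          (rexp (lam * ‖x‖) + rexp (lam * ‖y‖)) := by
  have ht' : 0 < t' := lt_of_lt_of_le ht htt'
  set c1 := rexp (lam ^ 2 * t + lam * ‖x‖) * (2 * π * t) ^ (-(d : ℝ) / 2) with hc1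
  set c2 := rexp (lam ^ 2 * t' + lam * ‖y‖) * (2 * π * t') ^ (-(d : ℝ) / 2) with hc2
  have hg1 := integrable_gauss (d := d) ht x
  have hg2 := integrable_gauss (d := d) ht' y
  have hint : Integrable (fun w : E ↦ c1 * rexp (-(‖x - w‖ ^ 2 / (8 * t)))
      + c2 * rexp (-(‖y - w‖ ^ 2 / (8 * t')))) := (hg1.const_mul c1).add (hg2.const_mul c2)
  have hmono : (∫ w : E, |heatKernel d t (x - w) - heatKernel d t' (y - w)| * rexp (lam * ‖w‖))
      ≤ ∫ w : E, (c1 * rexp (-(‖x - w‖ ^ 2 / (8 * t)))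
        + c2 * rexp (-(‖y - w‖ ^ 2 / (8 * t')))) := by
    apply integral_mono_of_nonneg (ae_of_all _ fun w ↦ by positivity) hint
    apply ae_of_all _ fun w ↦ ?_
    have hA := hk_mul_exp_le (d := d) ht hlam x w
    have hB' := hk_mul_exp_le (d := d) ht' hlam y w
    have e1 : rexp (-(‖x - w‖ ^ 2 / (4 * t))) ≤ rexp (-(‖x - w‖ ^ 2 / (8 * t))) :=
      Real.exp_le_exp.2 (neg_le_neg
        (div_le_div_of_nonneg_left (sq_nonneg _) (by positivity) (by linarith)))
    have e2 : rexp (-(‖y - w‖ ^ 2 / (4 * t'))) ≤ rexp (-(‖y - w‖ ^ 2 / (8 * t'))) :=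
      Real.exp_le_exp.2 (neg_le_neg
        (div_le_div_of_nonneg_left (sq_nonneg _) (by positivity) (by linarith)))
    have htri : |heatKernel d t (x - w) - heatKernel d t' (y - w)|
        ≤ heatKernel d t (x - w) + heatKernel d t' (y - w) := by
      calc |heatKernel d t (x - w) - heatKernel d t' (y - w)|
          ≤ |heatKernel d t (x - w)| + |heatKernel d t' (y - w)| := abs_sub _ _
        _ = heatKernel d t (x - w) + heatKernel d t' (y - w) := by
            rw [abs_of_nonneg (hk_nonneg ht _), abs_of_nonneg (hk_nonneg ht' _)]
    have hL : 0 ≤ rexp (lam * ‖w‖) := Real.exp_nonneg _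
    have hex : (0:ℝ) ≤ rexp (lam ^ 2 * t + lam * ‖x‖) := Real.exp_nonneg _
    have hey : (0:ℝ) ≤ rexp (lam ^ 2 * t' + lam * ‖y‖) := Real.exp_nonneg _
    have hpt : (0:ℝ) ≤ (2 * π * t) ^ (-(d : ℝ) / 2) := Real.rpow_nonneg (by positivity) _
    have hpt' : (0:ℝ) ≤ (2 * π * t') ^ (-(d : ℝ) / 2) := Real.rpow_nonneg (by positivity) _
    calc |heatKernel d t (x - w) - heatKernel d t' (y - w)| * rexp (lam * ‖w‖)
        ≤ (heatKernel d t (x - w) + heatKernel d t' (y - w)) * rexp (lam * ‖w‖) :=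
          mul_le_mul_of_nonneg_right htri hL
      _ = heatKernel d t (x - w) * rexp (lam * ‖w‖)
          + heatKernel d t' (y - w) * rexp (lam * ‖w‖) := by ring
      _ ≤ rexp (lam ^ 2 * t + lam * ‖x‖) *
            ((2 * π * t) ^ (-(d : ℝ) / 2) * rexp (-(‖x - w‖ ^ 2 / (4 * t))))
          + rexp (lam ^ 2 * t' + lam * ‖y‖) *
            ((2 * π * t') ^ (-(d : ℝ) / 2) * rexp (-(‖y - w‖ ^ 2 / (4 * t')))) :=
          add_le_add hA hB'
      _ ≤ rexp (lam ^ 2 * t + lam * ‖x‖) *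
            ((2 * π * t) ^ (-(d : ℝ) / 2) * rexp (-(‖x - w‖ ^ 2 / (8 * t))))
          + rexp (lam ^ 2 * t' + lam * ‖y‖) *
            ((2 * π * t') ^ (-(d : ℝ) / 2) * rexp (-(‖y - w‖ ^ 2 / (8 * t')))) :=
          add_le_add (mul_le_mul_of_nonneg_left (mul_le_mul_of_nonneg_left e1 hpt) hex)
            (mul_le_mul_of_nonneg_left (mul_le_mul_of_nonneg_left e2 hpt') hey)
      _ = c1 * rexp (-(‖x - w‖ ^ 2 / (8 * t))) + c2 * rexp (-(‖y - w‖ ^ 2 / (8 * t'))) := by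
          rw [hc1, hc2]; ring
  have hval : (∫ w : E, (c1 * rexp (-(‖x - w‖ ^ 2 / (8 * t)))
        + c2 * rexp (-(‖y - w‖ ^ 2 / (8 * t')))))
      = c1 * (8 * π * t) ^ ((d:ℝ) / 2) + c2 * (8 * π * t') ^ ((d:ℝ) / 2) := by
    rw [integral_add (hg1.const_mul c1) (hg2.const_mul c2), integral_const_mul,
      integral_const_mul, integral_gauss ht x, integral_gauss ht' y]
  rw [hval] at hmono
  refine hmono.trans ?_
  have k1 : c1 * (8 * π * t) ^ ((d:ℝ) / 2)
      = rexp (lam ^ 2 * t) * rexp (lam * ‖x‖) * 4 ^ ((d:ℝ) / 2) := by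
    rw [hc1, Real.exp_add]
    rw [mul_assoc, prefactor_mul ht]
  have k2 : c2 * (8 * π * t') ^ ((d:ℝ) / 2)
      = rexp (lam ^ 2 * t') * rexp (lam * ‖y‖) * 4 ^ ((d:ℝ) / 2) := by
    rw [hc2, Real.exp_add]
    rw [mul_assoc, prefactor_mul ht']
  rw [k1, k2]
  have hmm : rexp (lam ^ 2 * t) ≤ rexp (lam ^ 2 * t') :=
    Real.exp_le_exp.2 (by nlinarith [sq_nonneg lam])
  have h4 : (0:ℝ) < 4 ^ ((d:ℝ) / 2) := Real.rpow_pos_of_pos (by norm_num) _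
  nlinarith [Real.exp_pos (lam * ‖x‖), Real.exp_pos (lam * ‖y‖),
    Real.exp_pos (lam ^ 2 * t'),
    mul_le_mul_of_nonneg_right hmm (Real.exp_nonneg (lam * ‖x‖))]

/-- Refined bound (the `β = 1` modulus-of-continuity bound). -/
lemma integral_bound_B {t t' lam : ℝ} (ht : 0 < t) (htt' : t ≤ t') (hlam : 0 ≤ lam)
    (x y : E) :
    (∫ w : E, |heatKernel d t (x - w) - heatKernel d t' (y - w)| * rexp (lam * ‖w‖))
      ≤ ((d:ℝ) + 8) * 4 ^ ((d:ℝ) / 2) * rexp (lam ^ 2 * t') *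
          (rexp (lam * ‖x‖) + rexp (lam * ‖y‖)) *
          (t ^ (-(1:ℝ) / 2) * ‖x - y‖ + t ^ (-(1:ℝ)) * (t' - t)) := by
  have ht' : 0 < t' := lt_of_lt_of_le ht htt'
  have hs1 : (0:ℝ) ≤ t ^ (-(1:ℝ) / 2) * ‖x - y‖ :=
    mul_nonneg (Real.rpow_nonneg ht.le _) (norm_nonneg _)
  have hs2 : (0:ℝ) ≤ t ^ (-(1:ℝ)) * (t' - t) :=
    mul_nonneg (Real.rpow_nonneg ht.le _) (by linarith)
  have h4 : (0:ℝ) < 4 ^ ((d:ℝ) / 2) := Real.rpow_pos_of_pos (by norm_num) _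
  have hP : (0:ℝ) < rexp (lam ^ 2 * t') := Real.exp_pos _
  have hE : (0:ℝ) < rexp (lam * ‖x‖) + rexp (lam * ‖y‖) := by positivity
  rcases le_total ‖x - y‖ (Real.sqrt t) with hgood | hbad
  swap
  · -- "far" case: the trivial bound suffices
    have hone : 1 ≤ t ^ (-(1:ℝ) / 2) * ‖x - y‖ := by
      have h1 : t ^ (-(1:ℝ) / 2) * Real.sqrt t = 1 := by
        rw [Real.sqrt_eq_rpow, ← Real.rpow_add ht]
        norm_num
      calc (1:ℝ) = t ^ (-(1:ℝ) / 2) * Real.sqrt t := h1.symm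
        _ ≤ t ^ (-(1:ℝ) / 2) * ‖x - y‖ :=
            mul_le_mul_of_nonneg_left hbad (Real.rpow_nonneg ht.le _)
    refine (integral_bound_A ht htt' hlam x y).trans ?_
    calc 4 ^ ((d:ℝ) / 2) * rexp (lam ^ 2 * t') * (rexp (lam * ‖x‖) + rexp (lam * ‖y‖))
        ≤ ((d:ℝ) + 8) * 4 ^ ((d:ℝ) / 2) * rexp (lam ^ 2 * t') *
            (rexp (lam * ‖x‖) + rexp (lam * ‖y‖)) := by
          nlinarith [mul_pos (mul_pos h4 hP) hE, (by positivity : (0:ℝ) ≤ (d:ℝ))]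
      _ = ((d:ℝ) + 8) * 4 ^ ((d:ℝ) / 2) * rexp (lam ^ 2 * t') *
            (rexp (lam * ‖x‖) + rexp (lam * ‖y‖)) * 1 := (mul_one _).symm
      _ ≤ ((d:ℝ) + 8) * 4 ^ ((d:ℝ) / 2) * rexp (lam ^ 2 * t') *
            (rexp (lam * ‖x‖) + rexp (lam * ‖y‖)) *
            (t ^ (-(1:ℝ) / 2) * ‖x - y‖ + t ^ (-(1:ℝ)) * (t' - t)) := by
          have hpos : (0:ℝ) ≤ ((d:ℝ) + 8) * 4 ^ ((d:ℝ) / 2) * rexp (lam ^ 2 * t') *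
              (rexp (lam * ‖x‖) + rexp (lam * ‖y‖)) := by positivity
          exact mul_le_mul_of_nonneg_left (by linarith) hpos
  · -- "near" case
    set st := Real.sqrt t with hst
    have hst0 : 0 < st := Real.sqrt_pos.2 ht
    have hstt : st / t = t ^ (-(1:ℝ) / 2) := by
      have hprod : t ^ (-(1:ℝ) / 2) * t ^ (1:ℝ) = t ^ ((1:ℝ) / 2) := by
        rw [← Real.rpow_add ht]; norm_num
      rw [hst, Real.sqrt_eq_rpow, ← hprod, Real.rpow_one]
      field_simp
    have hrno : t ^ (-(1:ℝ)) = t⁻¹ := Real.rpow_neg_one t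
    set ex := rexp (lam ^ 2 * t + lam * ‖x‖) with hexd
    set ey := rexp (lam ^ 2 * t + lam * ‖y‖) with heyd
    set ey' := rexp (lam ^ 2 * t' + lam * ‖y‖) with hey'd
    set pt := (2 * π * t) ^ (-(d : ℝ) / 2) with hptd
    set pt' := (2 * π * t') ^ (-(d : ℝ) / 2) with hpt'd
    have hex0 : 0 ≤ ex := Real.exp_nonneg _
    have hey0 : 0 ≤ ey := Real.exp_nonneg _
    have hey'0 : 0 ≤ ey' := Real.exp_nonneg _
    have hpt0 : 0 ≤ pt := Real.rpow_nonneg (by positivity) _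
    have hpt'0 : 0 ≤ pt' := Real.rpow_nonneg (by positivity) _
    set q1 := 7 / 2 * (t ^ (-(1:ℝ) / 2) * ‖x - y‖) * (ex * pt) with hq1
    set q2 := 7 / 2 * (t ^ (-(1:ℝ) / 2) * ‖x - y‖) * (ey * pt)
      + (d:ℝ) * (t ^ (-(1:ℝ)) * (t' - t)) * (ey * pt) with hq2
    set q3 := 4 * (t ^ (-(1:ℝ)) * (t' - t)) * (ey' * pt') with hq3
    have hg1 := integrable_gauss (d := d) ht x
    have hg2 := integrable_gauss (d := d) ht y
    have hg3 := integrable_gauss (d := d) ht' y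
    have hint : Integrable (fun w : E ↦ q1 * rexp (-(‖x - w‖ ^ 2 / (8 * t)))
        + q2 * rexp (-(‖y - w‖ ^ 2 / (8 * t))) + q3 * rexp (-(‖y - w‖ ^ 2 / (8 * t')))) :=
      ((hg1.const_mul q1).add (hg2.const_mul q2)).add (hg3.const_mul q3)
    have hmono : (∫ w : E, |heatKernel d t (x - w) - heatKernel d t' (y - w)| *
          rexp (lam * ‖w‖))
        ≤ ∫ w : E, (q1 * rexp (-(‖x - w‖ ^ 2 / (8 * t)))
            + q2 * rexp (-(‖y - w‖ ^ 2 / (8 * t))) + q3 * rexp (-(‖y - w‖ ^ 2 / (8 * t')))) := by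
      apply integral_mono_of_nonneg (ae_of_all _ fun w ↦ by positivity) hint
      refine ae_of_all _ fun w ↦ ?_
      have hL : 0 ≤ rexp (lam * ‖w‖) := Real.exp_nonneg _
      have ha0 : 0 ≤ ‖x - w‖ := norm_nonneg _
      have hb0 : 0 ≤ ‖y - w‖ := norm_nonneg _
      have hba : ‖y - w‖ ≤ ‖x - w‖ + ‖x - y‖ := by
        rw [show y - w = (x - w) - (x - y) from by abel]
        exact norm_sub_le _ _
      have hab : ‖x - w‖ ≤ ‖y - w‖ + ‖x - y‖ := by
        calc ‖x - w‖ = ‖(y - w) + (x - y)‖ := by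
              rw [show (y - w) + (x - y) = x - w from by abel]
          _ ≤ ‖y - w‖ + ‖x - y‖ := norm_add_le _ _
      have hA := hk_mul_exp_le (d := d) ht hlam x w
      have hB := hk_mul_exp_le (d := d) ht hlam y w
      have hB' := hk_mul_exp_le (d := d) ht' hlam y w
      have hAL0 : 0 ≤ heatKernel d t (x - w) * rexp (lam * ‖w‖) :=
        mul_nonneg (hk_nonneg ht _) hL
      have hBL0 : 0 ≤ heatKernel d t (y - w) * rexp (lam * ‖w‖) :=
        mul_nonneg (hk_nonneg ht _) hL
      have habs1x : (2 * ‖x - w‖ + st) * rexp (-(‖x - w‖ ^ 2 / (4 * t)))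
          ≤ 7 * st * rexp (-(‖x - w‖ ^ 2 / (8 * t))) := by
        have l := linear_absorb ha0 ht
        have m : rexp (-(‖x - w‖ ^ 2 / (4 * t))) ≤ rexp (-(‖x - w‖ ^ 2 / (8 * t))) :=
          Real.exp_le_exp.2 (neg_le_neg
            (div_le_div_of_nonneg_left (sq_nonneg _) (by positivity) (by linarith)))
        have m' := mul_le_mul_of_nonneg_left m hst0.le
        linarith
      have habs1y : (2 * ‖y - w‖ + st) * rexp (-(‖y - w‖ ^ 2 / (4 * t)))
          ≤ 7 * st * rexp (-(‖y - w‖ ^ 2 / (8 * t))) := by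
        have l := linear_absorb hb0 ht
        have m : rexp (-(‖y - w‖ ^ 2 / (4 * t))) ≤ rexp (-(‖y - w‖ ^ 2 / (8 * t))) :=
          Real.exp_le_exp.2 (neg_le_neg
            (div_le_div_of_nonneg_left (sq_nonneg _) (by positivity) (by linarith)))
        have m' := mul_le_mul_of_nonneg_left m hst0.le
        linarith
      have habs2 : ‖y - w‖ ^ 2 * rexp (-(‖y - w‖ ^ 2 / (4 * t')))
          ≤ 8 * t' * rexp (-(‖y - w‖ ^ 2 / (8 * t'))) := sq_absorb ht'
      have habs3 : rexp (-(‖y - w‖ ^ 2 / (4 * t))) ≤ rexp (-(‖y - w‖ ^ 2 / (8 * t))) :=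
        Real.exp_le_exp.2 (neg_le_neg
          (div_le_div_of_nonneg_left (sq_nonneg _) (by positivity) (by linarith)))
      -- space part
      have P1 : |heatKernel d t (x - w) - heatKernel d t (y - w)| * rexp (lam * ‖w‖)
          ≤ ‖x - y‖ / (2 * t) * (7 * st) *
              (ex * pt * rexp (-(‖x - w‖ ^ 2 / (8 * t)))
                + ey * pt * rexp (-(‖y - w‖ ^ 2 / (8 * t)))) := by
        calc |heatKernel d t (x - w) - heatKernel d t (y - w)| * rexp (lam * ‖w‖)
            ≤ (‖x - y‖ / (2 * t) * ((‖x - w‖ + ‖y - w‖) *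
                (heatKernel d t (x - w) + heatKernel d t (y - w)))) * rexp (lam * ‖w‖) :=
              mul_le_mul_of_nonneg_right (hk_space_diff ht x y w) hL
          _ = ‖x - y‖ / (2 * t) *
                ((‖x - w‖ + ‖y - w‖) * (heatKernel d t (x - w) * rexp (lam * ‖w‖))
                  + (‖x - w‖ + ‖y - w‖) * (heatKernel d t (y - w) * rexp (lam * ‖w‖))) := by
              ring
          _ ≤ ‖x - y‖ / (2 * t) *
                ((2 * ‖x - w‖ + st) * (heatKernel d t (x - w) * rexp (lam * ‖w‖))
                  + (2 * ‖y - w‖ + st) * (heatKernel d t (y - w) * rexp (lam * ‖w‖))) := by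
              apply mul_le_mul_of_nonneg_left _ (by positivity)
              apply add_le_add
              · exact mul_le_mul_of_nonneg_right (by linarith) hAL0
              · exact mul_le_mul_of_nonneg_right (by linarith) hBL0
          _ ≤ ‖x - y‖ / (2 * t) *
                ((2 * ‖x - w‖ + st) * (ex * (pt * rexp (-(‖x - w‖ ^ 2 / (4 * t)))))
                  + (2 * ‖y - w‖ + st) * (ey * (pt * rexp (-(‖y - w‖ ^ 2 / (4 * t)))))) := by
              apply mul_le_mul_of_nonneg_left _ (by positivity)
              apply add_le_add
              · exact mul_le_mul_of_nonneg_left hA (by linarith)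
              · exact mul_le_mul_of_nonneg_left hB (by linarith)
          _ = ‖x - y‖ / (2 * t) *
                (ex * pt * ((2 * ‖x - w‖ + st) * rexp (-(‖x - w‖ ^ 2 / (4 * t))))
                  + ey * pt * ((2 * ‖y - w‖ + st) * rexp (-(‖y - w‖ ^ 2 / (4 * t))))) := by
              ring
          _ ≤ ‖x - y‖ / (2 * t) *
                (ex * pt * (7 * st * rexp (-(‖x - w‖ ^ 2 / (8 * t))))
                  + ey * pt * (7 * st * rexp (-(‖y - w‖ ^ 2 / (8 * t))))) := by
              apply mul_le_mul_of_nonneg_left _ (by positivity)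
              apply add_le_add
              · exact mul_le_mul_of_nonneg_left habs1x (by positivity)
              · exact mul_le_mul_of_nonneg_left habs1y (by positivity)
          _ = ‖x - y‖ / (2 * t) * (7 * st) *
                (ex * pt * rexp (-(‖x - w‖ ^ 2 / (8 * t)))
                  + ey * pt * rexp (-(‖y - w‖ ^ 2 / (8 * t)))) := by ring
      -- time part
      have P2 : |heatKernel d t (y - w) - heatKernel d t' (y - w)| * rexp (lam * ‖w‖)
          ≤ (d:ℝ) * ((t' - t) / t) * (ey * pt * rexp (-(‖y - w‖ ^ 2 / (8 * t))))
            + (t' - t) / (2 * t * t') * (8 * t') *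
              (ey' * pt' * rexp (-(‖y - w‖ ^ 2 / (8 * t')))) := by
        calc |heatKernel d t (y - w) - heatKernel d t' (y - w)| * rexp (lam * ‖w‖)
            ≤ ((d : ℝ) * ((t' - t) / t) * heatKernel d t (y - w)
                + (t' - t) / (2 * t * t') * (‖y - w‖ ^ 2 * heatKernel d t' (y - w))) *
                rexp (lam * ‖w‖) :=
              mul_le_mul_of_nonneg_right (hk_time_diff ht htt' y w) hL
          _ = (d : ℝ) * ((t' - t) / t) * (heatKernel d t (y - w) * rexp (lam * ‖w‖))
              + (t' - t) / (2 * t * t') *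
                (‖y - w‖ ^ 2 * (heatKernel d t' (y - w) * rexp (lam * ‖w‖))) := by ring
          _ ≤ (d : ℝ) * ((t' - t) / t) * (ey * (pt * rexp (-(‖y - w‖ ^ 2 / (4 * t)))))
              + (t' - t) / (2 * t * t') *
                (‖y - w‖ ^ 2 * (ey' * (pt' * rexp (-(‖y - w‖ ^ 2 / (4 * t')))))) := by
              have hc1 : (0:ℝ) ≤ (d:ℝ) * ((t' - t) / t) :=
                mul_nonneg (Nat.cast_nonneg d) (div_nonneg (by linarith) ht.le)
              have hc2 : (0:ℝ) ≤ (t' - t) / (2 * t * t') :=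
                div_nonneg (by linarith) (by positivity)
              exact add_le_add (mul_le_mul_of_nonneg_left hB hc1)
                (mul_le_mul_of_nonneg_left
                  (mul_le_mul_of_nonneg_left hB' (sq_nonneg _)) hc2)
          _ = (d : ℝ) * ((t' - t) / t) * (ey * (pt * rexp (-(‖y - w‖ ^ 2 / (4 * t)))))
              + (t' - t) / (2 * t * t') *
                (ey' * pt' * (‖y - w‖ ^ 2 * rexp (-(‖y - w‖ ^ 2 / (4 * t'))))) := by ring
          _ ≤ (d : ℝ) * ((t' - t) / t) * (ey * (pt * rexp (-(‖y - w‖ ^ 2 / (8 * t)))))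
              + (t' - t) / (2 * t * t') *
                (ey' * pt' * (8 * t' * rexp (-(‖y - w‖ ^ 2 / (8 * t'))))) := by
              have hc1 : (0:ℝ) ≤ (d:ℝ) * ((t' - t) / t) :=
                mul_nonneg (Nat.cast_nonneg d) (div_nonneg (by linarith) ht.le)
              have hc2 : (0:ℝ) ≤ (t' - t) / (2 * t * t') :=
                div_nonneg (by linarith) (by positivity)
              exact add_le_add
                (mul_le_mul_of_nonneg_left
                  (mul_le_mul_of_nonneg_left
                    (mul_le_mul_of_nonneg_left habs3 hpt0) hey0) hc1)
                (mul_le_mul_of_nonneg_left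
                  (mul_le_mul_of_nonneg_left habs2 (mul_nonneg hey'0 hpt'0)) hc2)
          _ = (d:ℝ) * ((t' - t) / t) * (ey * pt * rexp (-(‖y - w‖ ^ 2 / (8 * t))))
              + (t' - t) / (2 * t * t') * (8 * t') *
                (ey' * pt' * rexp (-(‖y - w‖ ^ 2 / (8 * t')))) := by ring
      calc |heatKernel d t (x - w) - heatKernel d t' (y - w)| * rexp (lam * ‖w‖)
          ≤ (|heatKernel d t (x - w) - heatKernel d t (y - w)|
              + |heatKernel d t (y - w) - heatKernel d t' (y - w)|) * rexp (lam * ‖w‖) :=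
            mul_le_mul_of_nonneg_right (abs_sub_le _ _ _) hL
        _ = |heatKernel d t (x - w) - heatKernel d t (y - w)| * rexp (lam * ‖w‖)
            + |heatKernel d t (y - w) - heatKernel d t' (y - w)| * rexp (lam * ‖w‖) := by ring
        _ ≤ (‖x - y‖ / (2 * t) * (7 * st) *
              (ex * pt * rexp (-(‖x - w‖ ^ 2 / (8 * t)))
                + ey * pt * rexp (-(‖y - w‖ ^ 2 / (8 * t)))))
            + ((d:ℝ) * ((t' - t) / t) * (ey * pt * rexp (-(‖y - w‖ ^ 2 / (8 * t))))
              + (t' - t) / (2 * t * t') * (8 * t') *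
                (ey' * pt' * rexp (-(‖y - w‖ ^ 2 / (8 * t'))))) := add_le_add P1 P2
        _ = q1 * rexp (-(‖x - w‖ ^ 2 / (8 * t))) + q2 * rexp (-(‖y - w‖ ^ 2 / (8 * t)))
            + q3 * rexp (-(‖y - w‖ ^ 2 / (8 * t'))) := by
            rw [hq1, hq2, hq3, ← hstt, hrno]
            field_simp
            ring
    have hval : (∫ w : E, (q1 * rexp (-(‖x - w‖ ^ 2 / (8 * t)))
          + q2 * rexp (-(‖y - w‖ ^ 2 / (8 * t))) + q3 * rexp (-(‖y - w‖ ^ 2 / (8 * t')))))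
        = q1 * (8 * π * t) ^ ((d:ℝ) / 2) + q2 * (8 * π * t) ^ ((d:ℝ) / 2)
          + q3 * (8 * π * t') ^ ((d:ℝ) / 2) := by
      have hi1 : Integrable (fun w : E ↦ q1 * rexp (-(‖x - w‖ ^ 2 / (8 * t)))) :=
        hg1.const_mul q1
      have hi2 : Integrable (fun w : E ↦ q2 * rexp (-(‖y - w‖ ^ 2 / (8 * t)))) :=
        hg2.const_mul q2
      have hi3 : Integrable (fun w : E ↦ q3 * rexp (-(‖y - w‖ ^ 2 / (8 * t')))) :=
        hg3.const_mul q3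
      have hi12 : Integrable (fun w : E ↦ q1 * rexp (-(‖x - w‖ ^ 2 / (8 * t)))
          + q2 * rexp (-(‖y - w‖ ^ 2 / (8 * t)))) := hi1.add hi2
      rw [integral_add hi12 hi3, integral_add hi1 hi2,
        integral_const_mul, integral_const_mul, integral_const_mul,
        integral_gauss ht x, integral_gauss ht y, integral_gauss ht' y]
    refine (hmono.trans_eq hval).trans ?_
    have hc : pt * (8 * π * t) ^ ((d:ℝ) / 2) = 4 ^ ((d:ℝ) / 2) := prefactor_mul ht
    have hc' : pt' * (8 * π * t') ^ ((d:ℝ) / 2) = 4 ^ ((d:ℝ) / 2) := prefactor_mul ht'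
    set s1 := t ^ (-(1:ℝ) / 2) * ‖x - y‖ with hs1d
    set s2 := t ^ (-(1:ℝ)) * (t' - t) with hs2d
    set P := rexp (lam ^ 2 * t') with hPd
    set Ex := rexp (lam * ‖x‖) with hExd
    set Ey := rexp (lam * ‖y‖) with hEyd
    have hEx0 : 0 < Ex := Real.exp_pos _
    have hEy0 : 0 < Ey := Real.exp_pos _
    have hxle : ex ≤ P * Ex := by
      rw [hexd, hPd, hExd, ← Real.exp_add]
      exact Real.exp_le_exp.2 (by nlinarith [sq_nonneg lam])
    have hyle : ey ≤ P * Ey := by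
      rw [heyd, hPd, hEyd, ← Real.exp_add]
      exact Real.exp_le_exp.2 (by nlinarith [sq_nonneg lam])
    have hy'eq : ey' = P * Ey := by
      rw [hey'd, hPd, hEyd, ← Real.exp_add]
    have hd0 : (0:ℝ) ≤ (d:ℝ) := Nat.cast_nonneg d
    calc q1 * (8 * π * t) ^ ((d:ℝ) / 2) + q2 * (8 * π * t) ^ ((d:ℝ) / 2)
          + q3 * (8 * π * t') ^ ((d:ℝ) / 2)
        = 7 / 2 * s1 * ex * (pt * (8 * π * t) ^ ((d:ℝ) / 2))
          + (7 / 2 * s1 * ey + (d:ℝ) * s2 * ey) * (pt * (8 * π * t) ^ ((d:ℝ) / 2))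
          + 4 * s2 * ey' * (pt' * (8 * π * t') ^ ((d:ℝ) / 2)) := by
          rw [hq1, hq2, hq3]; ring
      _ = (7 / 2 * s1 * ex + 7 / 2 * s1 * ey + (d:ℝ) * s2 * ey + 4 * s2 * ey')
            * 4 ^ ((d:ℝ) / 2) := by rw [hc, hc']; ring
      _ ≤ (7 / 2 * s1 * (P * Ex) + 7 / 2 * s1 * (P * Ey) + (d:ℝ) * s2 * (P * Ey)
            + 4 * s2 * (P * Ey)) * 4 ^ ((d:ℝ) / 2) := by
          apply mul_le_mul_of_nonneg_right _ h4.le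
          have c1 : (0:ℝ) ≤ 7 / 2 * s1 := by linarith
          have c2 : (0:ℝ) ≤ (d:ℝ) * s2 := mul_nonneg hd0 hs2
          refine add_le_add (add_le_add (add_le_add
            (mul_le_mul_of_nonneg_left hxle c1)
            (mul_le_mul_of_nonneg_left hyle c1))
            (mul_le_mul_of_nonneg_left hyle (mul_nonneg hd0 hs2))) ?_
          rw [hy'eq]
      _ = P * (7 / 2 * s1 * (Ex + Ey) + ((d:ℝ) + 4) * s2 * Ey) * 4 ^ ((d:ℝ) / 2) := by
          ring
      _ ≤ P * (((d:ℝ) + 8) * s1 * (Ex + Ey) + ((d:ℝ) + 8) * s2 * (Ex + Ey))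
            * 4 ^ ((d:ℝ) / 2) := by
          apply mul_le_mul_of_nonneg_right (mul_le_mul_of_nonneg_left _ hP.le) h4.le
          have hEsum : (0:ℝ) ≤ Ex + Ey := by linarith
          have e1 : 7 / 2 * s1 * (Ex + Ey) ≤ ((d:ℝ) + 8) * s1 * (Ex + Ey) := by
            apply mul_le_mul_of_nonneg_right _ hEsum
            apply mul_le_mul_of_nonneg_right _ hs1
            linarith
          have e2 : ((d:ℝ) + 4) * s2 * Ey ≤ ((d:ℝ) + 8) * s2 * (Ex + Ey) := by
            calc ((d:ℝ) + 4) * s2 * Ey ≤ ((d:ℝ) + 8) * s2 * Ey := by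
                  apply mul_le_mul_of_nonneg_right _ hEy0.le
                  exact mul_le_mul_of_nonneg_right (by linarith) hs2
              _ ≤ ((d:ℝ) + 8) * s2 * (Ex + Ey) := by
                  apply mul_le_mul_of_nonneg_left (by linarith)
                  exact mul_nonneg (by linarith) hs2
          linarith
      _ = ((d:ℝ) + 8) * 4 ^ ((d:ℝ) / 2) * P * (Ex + Ey) * (s1 + s2) := by ring

lemma real_rpow_add_le {a b p : ℝ} (ha : 0 ≤ a) (hb : 0 ≤ b) (hp : 0 ≤ p) (hp1 : p ≤ 1) :
    (a + b) ^ p ≤ a ^ p + b ^ p := by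
  lift a to NNReal using ha
  lift b to NNReal using hb
  rw [← NNReal.coe_add, ← NNReal.coe_rpow, ← NNReal.coe_rpow, ← NNReal.coe_rpow,
    ← NNReal.coe_add, NNReal.coe_le_coe]
  exact NNReal.rpow_add_le_add_rpow a b hp hp1


end HKAux



open HKAux in
/-- There is `c = c(d) > 0` such that for every `0 < β ≤ 1`, `λ' ≥ 0`,
`x, y ∈ ℝ^d` and `0 < t ≤ t'`,
`∫ |p_t(x−w) − p_{t'}(y−w)| e^{λ'|w|} dw
  ≤ c e^{2λ'²t'} (e^{λ'|x|}+e^{λ'|y|}) e^{2βλ'|x−y|} (t^{-β/2}|x−y|^β + t^{-β}(t'−t)^β)`. -/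
theorem heatKernel_space_time_difference_L1_bound
    (d : ℕ) (hd : 1 ≤ d) :
    ∃ c : ℝ, 0 < c ∧ ∀ (β : ℝ), 0 < β → β ≤ 1 → ∀ (lam : ℝ), 0 ≤ lam →
      ∀ (x y : EuclideanSpace ℝ (Fin d)) (t t' : ℝ), 0 < t → t ≤ t' →
      (∫ w : EuclideanSpace ℝ (Fin d),
          |heatKernel d t (x - w) - heatKernel d t' (y - w)| * Real.exp (lam * ‖w‖))
        ≤ c * Real.exp (2 * lam ^ 2 * t') * (Real.exp (lam * ‖x‖) + Real.exp (lam * ‖y‖)) *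
            Real.exp (2 * β * lam * ‖x - y‖) *
            (t ^ (-β / 2) * ‖x - y‖ ^ β + t ^ (-β) * (t' - t) ^ β) := by

  refine ⟨((d:ℝ) + 8) * 4 ^ ((d:ℝ) / 2), by positivity, ?_⟩
  intro β hβ0 hβ1 lam hlam x y t t' ht htt'
  have ht' : 0 < t' := lt_of_lt_of_le ht htt'
  set I := ∫ w : EuclideanSpace ℝ (Fin d),
    |heatKernel d t (x - w) - heatKernel d t' (y - w)| * Real.exp (lam * ‖w‖) with hI
  set K := ((d:ℝ) + 8) * 4 ^ ((d:ℝ) / 2) with hK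
  have hK0 : 0 < K := by positivity
  set P := rexp (lam ^ 2 * t') with hPd
  set Ex := rexp (lam * ‖x‖) with hExd
  set Ey := rexp (lam * ‖y‖) with hEyd
  have hP : 0 < P := Real.exp_pos _
  have hEx : 0 < Ex := Real.exp_pos _
  have hEy : 0 < Ey := Real.exp_pos _
  have hs1 : (0:ℝ) ≤ t ^ (-(1:ℝ) / 2) * ‖x - y‖ :=
    mul_nonneg (Real.rpow_nonneg ht.le _) (norm_nonneg _)
  have hs2 : (0:ℝ) ≤ t ^ (-(1:ℝ)) * (t' - t) :=
    mul_nonneg (Real.rpow_nonneg ht.le _) (by linarith)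
  set S := t ^ (-(1:ℝ) / 2) * ‖x - y‖ + t ^ (-(1:ℝ)) * (t' - t) with hSd
  have hS0 : 0 ≤ S := by rw [hSd]; linarith
  set M := K * (P * (Ex + Ey)) with hMd
  have hM0 : 0 < M := by
    rw [hMd]
    have : 0 < Ex + Ey := by linarith
    positivity
  have hTnn : (0:ℝ) ≤ t ^ (-β / 2) * ‖x - y‖ ^ β + t ^ (-β) * (t' - t) ^ β := by
    have a1 : (0:ℝ) ≤ t ^ (-β / 2) * ‖x - y‖ ^ β :=
      mul_nonneg (Real.rpow_nonneg ht.le _) (Real.rpow_nonneg (norm_nonneg _) _)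
    have a2 : (0:ℝ) ≤ t ^ (-β) * (t' - t) ^ β :=
      mul_nonneg (Real.rpow_nonneg ht.le _) (Real.rpow_nonneg (by linarith) _)
    linarith
  have hone : (1:ℝ) ≤ rexp (2 * β * lam * ‖x - y‖) := by
    have h0 : (0:ℝ) ≤ 2 * β * lam * ‖x - y‖ :=
      mul_nonneg (mul_nonneg (mul_nonneg (by norm_num) hβ0.le) hlam) (norm_nonneg _)
    have := Real.exp_le_exp.2 h0
    rwa [Real.exp_zero] at this
  have hPle : P ≤ rexp (2 * lam ^ 2 * t') := by
    rw [hPd]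
    exact Real.exp_le_exp.2 (by nlinarith [sq_nonneg lam])
  have hRHSnn : (0:ℝ) ≤ K * Real.exp (2 * lam ^ 2 * t') * (Ex + Ey) *
      Real.exp (2 * β * lam * ‖x - y‖) *
      (t ^ (-β / 2) * ‖x - y‖ ^ β + t ^ (-β) * (t' - t) ^ β) := by
    apply mul_nonneg _ hTnn
    have : 0 < Ex + Ey := by linarith
    positivity
  have hA : I ≤ M := by
    refine (integral_bound_A ht htt' hlam x y).trans ?_
    have h1 : (1:ℝ) ≤ (d:ℝ) + 8 := by
      have : (0:ℝ) ≤ (d:ℝ) := Nat.cast_nonneg d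
      linarith
    calc 4 ^ ((d:ℝ) / 2) * P * (Ex + Ey)
        = 1 * (4 ^ ((d:ℝ) / 2) * (P * (Ex + Ey))) := by ring
      _ ≤ ((d:ℝ) + 8) * (4 ^ ((d:ℝ) / 2) * (P * (Ex + Ey))) := by
          apply mul_le_mul_of_nonneg_right h1
          have : 0 < Ex + Ey := by linarith
          positivity
      _ = M := by rw [hMd, hK]; ring
  have hB : I ≤ M * S := by
    refine (integral_bound_B ht htt' hlam x y).trans ?_
    rw [hMd, hK, hSd]
    apply le_of_eq
    ring
  rcases le_or_gt I 0 with hI0 | hI0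
  · exact hI0.trans hRHSnn
  · have step1 : I = I ^ ((1:ℝ) - β) * I ^ β := by
      rw [← Real.rpow_add hI0, sub_add_cancel, Real.rpow_one]
    have step2 : I ^ ((1:ℝ) - β) ≤ M ^ ((1:ℝ) - β) :=
      Real.rpow_le_rpow hI0.le hA (by linarith)
    have step3 : I ^ β ≤ (M * S) ^ β := Real.rpow_le_rpow hI0.le hB hβ0.le
    have hIM : I ≤ M * S ^ β := by
      calc I = I ^ ((1:ℝ) - β) * I ^ β := step1
        _ ≤ M ^ ((1:ℝ) - β) * (M * S) ^ β :=
            mul_le_mul step2 step3 (Real.rpow_nonneg hI0.le _) (Real.rpow_nonneg hM0.le _)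
        _ = M ^ ((1:ℝ) - β) * (M ^ β * S ^ β) := by rw [Real.mul_rpow hM0.le hS0]
        _ = (M ^ ((1:ℝ) - β) * M ^ β) * S ^ β := by ring
        _ = M * S ^ β := by rw [← Real.rpow_add hM0, sub_add_cancel, Real.rpow_one]
    have hterm1 : (t ^ (-(1:ℝ) / 2) * ‖x - y‖) ^ β = t ^ (-β / 2) * ‖x - y‖ ^ β := by
      rw [Real.mul_rpow (Real.rpow_nonneg ht.le _) (norm_nonneg _),
        ← Real.rpow_mul ht.le, show -(1:ℝ) / 2 * β = -β / 2 by ring]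
    have hterm2 : (t ^ (-(1:ℝ)) * (t' - t)) ^ β = t ^ (-β) * (t' - t) ^ β := by
      rw [Real.mul_rpow (Real.rpow_nonneg ht.le _) (by linarith : (0:ℝ) ≤ t' - t),
        ← Real.rpow_mul ht.le, show -(1:ℝ) * β = -β by ring]
    have hsplit : S ^ β ≤ t ^ (-β / 2) * ‖x - y‖ ^ β + t ^ (-β) * (t' - t) ^ β := by
      rw [← hterm1, ← hterm2, hSd]
      exact real_rpow_add_le hs1 hs2 hβ0.le hβ1
    calc I ≤ M * S ^ β := hIM
      _ ≤ M * (t ^ (-β / 2) * ‖x - y‖ ^ β + t ^ (-β) * (t' - t) ^ β) :=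
          mul_le_mul_of_nonneg_left hsplit hM0.le
      _ ≤ K * Real.exp (2 * lam ^ 2 * t') * (Ex + Ey) * Real.exp (2 * β * lam * ‖x - y‖) *
            (t ^ (-β / 2) * ‖x - y‖ ^ β + t ^ (-β) * (t' - t) ^ β) := by
          rw [hMd]
          calc K * (P * (Ex + Ey)) * (t ^ (-β / 2) * ‖x - y‖ ^ β + t ^ (-β) * (t' - t) ^ β)
              ≤ K * (rexp (2 * lam ^ 2 * t') * (Ex + Ey)) *
                  (t ^ (-β / 2) * ‖x - y‖ ^ β + t ^ (-β) * (t' - t) ^ β) := by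
                apply mul_le_mul_of_nonneg_right _ hTnn
                apply mul_le_mul_of_nonneg_left _ hK0.le
                exact mul_le_mul_of_nonneg_right hPle (by linarith)
            _ = K * rexp (2 * lam ^ 2 * t') * (Ex + Ey) * 1 *
                  (t ^ (-β / 2) * ‖x - y‖ ^ β + t ^ (-β) * (t' - t) ^ β) := by ring
            _ ≤ K * rexp (2 * lam ^ 2 * t') * (Ex + Ey) * rexp (2 * β * lam * ‖x - y‖) *
                  (t ^ (-β / 2) * ‖x - y‖ ^ β + t ^ (-β) * (t' - t) ^ β) := by
                apply mul_le_mul_of_nonneg_right _ hTnn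
                apply mul_le_mul_of_nonneg_left hone
                have : 0 < Ex + Ey := by linarith
                positivity
end

section
/- Let d ≥ 1. There exists a constant C = C(d) > 0 such that for all 0 < t ≤ t' and every w ∈ ℝ^d, |p_t(w) − p_{t'}(w)| ≤ C t^{-1} (t'−t) ( p_t(w) + p_{2t'}(w) ). -/
open Real MeasureTheory

private lemma aux_one_sub_rpow (d : ℕ) (hd : 1 ≤ d) {r : ℝ} (hr0 : 0 ≤ r) (hr1 : r ≤ 1) :
    1 - r ^ ((d : ℝ) / 2) ≤ d * (1 - r) := by
  rcases eq_or_lt_of_le hr0 with h0 | h0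
  · rw [← h0, Real.zero_rpow (by positivity)]
    have : (1 : ℝ) ≤ d := by exact_mod_cast hd
    linarith
  · rcases Nat.lt_or_ge d 2 with h2 | h2
    · interval_cases d
      have : r ^ (1:ℝ) ≤ r ^ ((1:ℕ) : ℝ) / 2 → True := fun _ => trivial
      have hle : r ≤ r ^ (((1:ℕ) : ℝ) / 2) := by
        have := Real.rpow_le_rpow_of_exponent_ge h0 hr1 (by norm_num : ((1:ℕ):ℝ)/2 ≤ 1)
        rwa [Real.rpow_one] at this
      push_cast
      linarith
    · have hp : (1:ℝ) ≤ (d : ℝ) / 2 := by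
        have : (2:ℝ) ≤ d := by exact_mod_cast h2
        linarith
      have hb := one_add_mul_self_le_rpow_one_add (s := r - 1) (by linarith) hp
      have heq : (1 : ℝ) + (r - 1) = r := by ring
      rw [heq] at hb
      have : (d:ℝ)/2 ≤ d := by
        have : (0:ℝ) ≤ d := Nat.cast_nonneg d
        linarith
      nlinarith [hr1]

private lemma aux_x_exp_neg (x : ℝ) (hx : 0 ≤ x) : x * Real.exp (-x) ≤ 1 := by
  have h1 : x ≤ Real.exp x := by linarith [Real.add_one_le_exp x]
  calc x * Real.exp (-x) ≤ Real.exp x * Real.exp (-x) :=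
        mul_le_mul_of_nonneg_right h1 (Real.exp_nonneg _)
    _ = 1 := by rw [← Real.exp_add]; simp

set_option maxHeartbeats 1600000 in
/-- There is `C = C(d) > 0` such that for all `0 < t ≤ t'` and `w ∈ ℝ^d`,
`|p_t(w) − p_{t'}(w)| ≤ C t⁻¹ (t'−t) (p_t(w) + p_{2t'}(w))`. -/
theorem heatKernel_time_difference_pointwise_bound
    (d : ℕ) (hd : 1 ≤ d) :
    ∃ C : ℝ, 0 < C ∧ ∀ (t t' : ℝ), 0 < t → t ≤ t' → ∀ w : EuclideanSpace ℝ (Fin d),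
      |heatKernel d t w - heatKernel d t' w|
        ≤ C * t⁻¹ * (t' - t) * (heatKernel d t w + heatKernel d (2 * t') w) := by
  refine ⟨2 ^ d * (d + 4), by positivity, ?_⟩
  intro t t' ht htt' w
  have ht' : 0 < t' := ht.trans_le htt'
  have hπ : 0 < Real.pi := Real.pi_pos
  have ht0 : t ≠ 0 := ne_of_gt ht
  have ht'0 : t' ≠ 0 := ne_of_gt ht'
  set a : ℝ := ‖w‖ ^ 2 with ha
  have ha0 : 0 ≤ a := sq_nonneg _
  set c : ℝ := (d : ℝ) / 2 with hc
  have hcpos : 0 < c := by positivity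
  have hexp : ∀ s : ℝ, -(d : ℝ) / 2 = -c := fun _ => by rw [hc]; ring
  simp only [heatKernel, neg_div, ← hc, ← ha]
  set A : ℝ := (2 * Real.pi * t) ^ (-c) with hA
  set A' : ℝ := (2 * Real.pi * t') ^ (-c) with hA'
  set B : ℝ := (2 * Real.pi * (2 * t')) ^ (-c) with hB
  set E : ℝ := Real.exp (-(a / (2 * t))) with hE
  set E' : ℝ := Real.exp (-(a / (2 * t'))) with hE'
  set F : ℝ := Real.exp (-(a / (2 * (2 * t')))) with hF
  have hApos : 0 < A := Real.rpow_pos_of_pos (by positivity) _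
  have hA'pos : 0 < A' := Real.rpow_pos_of_pos (by positivity) _
  have hBpos : 0 < B := Real.rpow_pos_of_pos (by positivity) _
  have hEpos : 0 < E := Real.exp_pos _
  have hE'pos : 0 < E' := Real.exp_pos _
  have hFpos : 0 < F := Real.exp_pos _
  clear_value a c A A' B E E' F
  clear ha hexp w
  -- monotonicity of the exponentials
  have hEE' : E ≤ E' := by
    rw [hE, hE', Real.exp_le_exp, neg_le_neg_iff]
    rw [div_le_div_iff₀ (by positivity) (by positivity)]
    nlinarith
  have hE'F : E' ≤ F := by
    rw [hE', hF, Real.exp_le_exp, neg_le_neg_iff]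
    rw [div_le_div_iff₀ (by positivity) (by positivity)]
    nlinarith
  -- A' ≤ A and the quantitative bound A - A' ≤ d * t⁻¹ * (t'-t) * A
  have hA'eq : A' = A * (t / t') ^ c := by
    rw [hA, hA']
    have h1 : 2 * Real.pi * t' = (2 * Real.pi * t) * (t' / t) := by
      field_simp
    rw [h1, Real.mul_rpow (by positivity) (by positivity)]
    congr 1
    rw [Real.rpow_neg (by positivity), ← Real.inv_rpow (by positivity)]
    congr 1
    field_simp
  have hr0 : 0 ≤ t / t' := by positivity
  have hr1 : t / t' ≤ 1 := by rw [div_le_one ht']; exact htt'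
  have hAdiff : A - A' ≤ (d : ℝ) * t⁻¹ * (t' - t) * A := by
    have h1 : 1 - (t / t') ^ c ≤ d * (1 - t / t') := by
      rw [hc]; exact aux_one_sub_rpow d hd hr0 hr1
    have h2 : 1 - t / t' ≤ t⁻¹ * (t' - t) := by
      rw [one_sub_div (ne_of_gt ht')]
      rw [div_le_iff₀ ht']
      have : 0 ≤ (t' - t) * (t' - t) := mul_self_nonneg _
      rw [inv_mul_eq_div, div_mul_eq_mul_div, le_div_iff₀ ht]
      nlinarith
    have h3 : A - A' = A * (1 - (t / t') ^ c) := by rw [hA'eq]; ring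
    rw [h3]
    calc A * (1 - (t / t') ^ c) ≤ A * ((d : ℝ) * (1 - t / t')) := by
          exact mul_le_mul_of_nonneg_left h1 hApos.le
      _ ≤ A * ((d : ℝ) * (t⁻¹ * (t' - t))) := by
          have : (0:ℝ) ≤ (d:ℝ) := by positivity
          have := mul_le_mul_of_nonneg_left h2 this
          exact mul_le_mul_of_nonneg_left this hApos.le
      _ = (d : ℝ) * t⁻¹ * (t' - t) * A := by ring
  have hA'A : A' ≤ A := by
    rw [hA'eq]
    nlinarith [Real.rpow_le_one hr0 hr1 hcpos.le, Real.rpow_nonneg hr0 c, hApos]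
  -- E' - E ≤ 2 * t⁻¹ * (t' - t) * F
  have hEdiff : E' - E ≤ 2 * t⁻¹ * (t' - t) * F := by
    have hy : -(a / (2 * t)) = -(a / (2 * t')) + -(a * (t' - t) / (2 * t * t')) := by
      field_simp
      ring
    set y : ℝ := a * (t' - t) / (2 * t * t') with hyy
    clear_value y
    have hy0 : 0 ≤ y := by
      rw [hyy]
      apply div_nonneg
      · nlinarith
      · positivity
    have hEeq : E = E' * Real.exp (-y) := by
      rw [hE, hE', hy, Real.exp_add]
    have h1 : 1 - Real.exp (-y) ≤ y := by
      linarith [Real.add_one_le_exp (-y)]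
    have h2 : E' - E = E' * (1 - Real.exp (-y)) := by rw [hEeq]; ring
    -- E' * (a / (2 * t')) ≤ 2 * F
    have h3 : E' * (a / (2 * t')) ≤ 2 * F := by
      set x : ℝ := a / (2 * (2 * t')) with hx
      clear_value x
      have hx0 : 0 ≤ x := by rw [hx]; positivity
      have hE'x : E' = Real.exp (-x) * Real.exp (-x) := by
        rw [hE', ← Real.exp_add, hx]
        congr 1
        field_simp
        ring
      have hax : a / (2 * t') = 2 * x := by rw [hx]; field_simp
      rw [hE'x, hax]
      have := aux_x_exp_neg x hx0
      have hF' : F = Real.exp (-x) := by rw [hF, hx]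
      rw [hF']
      have h5 := mul_le_mul_of_nonneg_left this (by positivity : (0:ℝ) ≤ 2 * Real.exp (-x))
      calc Real.exp (-x) * Real.exp (-x) * (2 * x)
          = 2 * Real.exp (-x) * (x * Real.exp (-x)) := by ring
        _ ≤ 2 * Real.exp (-x) * 1 := h5
        _ = 2 * Real.exp (-x) := by ring
    have hyfac : y = (a / (2 * t')) * (t⁻¹ * (t' - t)) := by
      rw [hyy]; field_simp
    rw [h2]
    calc E' * (1 - Real.exp (-y)) ≤ E' * y := mul_le_mul_of_nonneg_left h1 hE'pos.le
      _ = (E' * (a / (2 * t'))) * (t⁻¹ * (t' - t)) := by rw [hyfac]; ring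
      _ ≤ (2 * F) * (t⁻¹ * (t' - t)) := by
          apply mul_le_mul_of_nonneg_right h3
          have : 0 ≤ t' - t := by linarith
          positivity
      _ = 2 * t⁻¹ * (t' - t) * F := by ring
  -- the absolute value split
  have habs : |A * E - A' * E'| ≤ (A - A') * E' + A * (E' - E) := by
    have h1 : 0 ≤ (A - A') * E' := mul_nonneg (by linarith) hE'pos.le
    have h2 : 0 ≤ A * (E' - E) := mul_nonneg hApos.le (by linarith)
    have e : A * E - A' * E' = (A - A') * E' - A * (E' - E) := by ring
    rw [abs_le, e]
    constructor <;> linarith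
  have httnn : 0 ≤ t⁻¹ * (t' - t) := by
    have : 0 ≤ t' - t := by linarith
    positivity
  have hstep : |A * E - A' * E'| ≤ ((d : ℝ) + 2) * t⁻¹ * (t' - t) * (A * F) := by
    calc |A * E - A' * E'| ≤ (A - A') * E' + A * (E' - E) := habs
      _ ≤ ((d : ℝ) * t⁻¹ * (t' - t) * A) * F + A * (2 * t⁻¹ * (t' - t) * F) := by
          apply add_le_add
          · calc (A - A') * E' ≤ (A - A') * F :=
                  mul_le_mul_of_nonneg_left hE'F (by linarith)
              _ ≤ ((d : ℝ) * t⁻¹ * (t' - t) * A) * F :=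
                  mul_le_mul_of_nonneg_right hAdiff hFpos.le
          · exact mul_le_mul_of_nonneg_left hEdiff hApos.le
      _ = ((d : ℝ) + 2) * t⁻¹ * (t' - t) * (A * F) := by ring
  have hinv : ∀ x y z : ℝ, 0 < x → 0 < y → 0 < z → y ≤ z * x → x⁻¹ ≤ z * y⁻¹ := by
    intro x y z hx hy hz h
    have h2 : z * y⁻¹ = (y / z)⁻¹ := by field_simp
    rw [h2, inv_le_inv₀ hx (by positivity), div_le_iff₀ hz]
    linarith
  have h2d : (0:ℝ) < 2 ^ d := by positivity
  have hcd : c ≤ (d : ℝ) := by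
    rw [hc]
    have : (0:ℝ) ≤ d := Nat.cast_nonneg d
    linarith
  have h2c : (2:ℝ) ^ c ≤ 2 ^ d := by
    have := Real.rpow_le_rpow_of_exponent_le (by norm_num : (1:ℝ) ≤ 2) hcd
    rwa [Real.rpow_natCast] at this
  have hAE : 0 ≤ A * E := mul_nonneg hApos.le hEpos.le
  have hBF : 0 ≤ B * F := mul_nonneg hBpos.le hFpos.le
  rcases le_or_gt t' (2 * t) with hcase | hcase
  · -- main case : t' ≤ 2t, so A ≤ 2^d * B
    have hxpos : (0:ℝ) < (2 * Real.pi * t) ^ c := Real.rpow_pos_of_pos (by positivity) _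
    have hypos : (0:ℝ) < (2 * Real.pi * (2 * t')) ^ c := Real.rpow_pos_of_pos (by positivity) _
    have hAB : A ≤ 2 ^ d * B := by
      have h4 : (2 * Real.pi * (2 * t')) ^ c ≤ (2:ℝ) ^ d * (2 * Real.pi * t) ^ c := by
        calc (2 * Real.pi * (2 * t')) ^ c ≤ (4 * (2 * Real.pi * t)) ^ c := by
              apply Real.rpow_le_rpow (by positivity) (by nlinarith) hcpos.le
          _ = 4 ^ c * (2 * Real.pi * t) ^ c := Real.mul_rpow (by norm_num) (by positivity)
          _ = (2:ℝ) ^ d * (2 * Real.pi * t) ^ c := by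
              congr 1
              have h42 : (4:ℝ) = 2 ^ (2:ℝ) := by
                rw [show ((2:ℝ):ℝ) = ((2:ℕ):ℝ) by norm_num, Real.rpow_natCast]; norm_num
              rw [h42, ← Real.rpow_natCast 2 d, ← Real.rpow_mul (by norm_num)]
              congr 1
              rw [hc]; ring
      have := hinv _ _ _ hxpos hypos h2d h4
      rwa [hA, hB, Real.rpow_neg (by positivity), Real.rpow_neg (by positivity)]
    have hnn : 0 ≤ ((d:ℝ) + 2) * t⁻¹ * (t' - t) := by
      have h5 : 0 ≤ t' - t := by linarith
      positivity
    have hAF : A * F ≤ 2 ^ d * (A * E + B * F) := by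
      calc A * F ≤ (2 ^ d * B) * F := mul_le_mul_of_nonneg_right hAB hFpos.le
        _ = 2 ^ d * (B * F) := by ring
        _ ≤ 2 ^ d * (A * E + B * F) := by nlinarith
    calc |A * E - A' * E'| ≤ ((d : ℝ) + 2) * t⁻¹ * (t' - t) * (A * F) := hstep
      _ ≤ ((d : ℝ) + 2) * t⁻¹ * (t' - t) * (2 ^ d * (A * E + B * F)) :=
          mul_le_mul_of_nonneg_left hAF hnn
      _ = (((d:ℝ) + 2) * 2 ^ d) * (t⁻¹ * (t' - t) * (A * E + B * F)) := by ring
      _ ≤ (2 ^ d * ((d:ℝ) + 4)) * (t⁻¹ * (t' - t) * (A * E + B * F)) := by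
          apply mul_le_mul_of_nonneg_right
          · nlinarith
          · exact mul_nonneg httnn (by linarith)
      _ = 2 ^ d * ((d:ℝ) + 4) * t⁻¹ * (t' - t) * (A * E + B * F) := by ring
  · -- easy case : 2t < t', so 1 ≤ t⁻¹ * (t' - t)
    have h1 : 1 ≤ t⁻¹ * (t' - t) := by
      rw [le_inv_mul_iff₀ ht]
      linarith
    have hxpos : (0:ℝ) < (2 * Real.pi * t') ^ c := Real.rpow_pos_of_pos (by positivity) _
    have hypos : (0:ℝ) < (2 * Real.pi * (2 * t')) ^ c := Real.rpow_pos_of_pos (by positivity) _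
    have hA'B : A' ≤ 2 ^ d * B := by
      have h4 : (2 * Real.pi * (2 * t')) ^ c ≤ (2:ℝ) ^ d * (2 * Real.pi * t') ^ c := by
        calc (2 * Real.pi * (2 * t')) ^ c = (2 * (2 * Real.pi * t')) ^ c := by ring_nf
          _ = 2 ^ c * (2 * Real.pi * t') ^ c := Real.mul_rpow (by norm_num) (by positivity)
          _ ≤ (2:ℝ) ^ d * (2 * Real.pi * t') ^ c :=
              mul_le_mul_of_nonneg_right h2c hxpos.le
      have := hinv _ _ _ hxpos hypos h2d h4
      rwa [hA', hB, Real.rpow_neg (by positivity), Real.rpow_neg (by positivity)]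
    have hK1 : (1:ℝ) ≤ 2 ^ d * ((d:ℝ) + 4) := by nlinarith [one_le_pow₀ (by norm_num : (1:ℝ) ≤ 2) (n := d), Nat.cast_nonneg (α := ℝ) d]
    have hK2 : (2:ℝ) ^ d ≤ 2 ^ d * ((d:ℝ) + 4) := by nlinarith [Nat.cast_nonneg (α := ℝ) d]
    calc |A * E - A' * E'| ≤ A * E + A' * E' := by
          have p1 : 0 ≤ A * E := hAE
          have p2 : 0 ≤ A' * E' := mul_nonneg hA'pos.le hE'pos.le
          rw [abs_le]
          constructor <;> linarith
      _ ≤ A * E + 2 ^ d * (B * F) := by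
          have : A' * E' ≤ 2 ^ d * (B * F) := by
            calc A' * E' ≤ (2 ^ d * B) * E' := mul_le_mul_of_nonneg_right hA'B hE'pos.le
              _ ≤ (2 ^ d * B) * F := mul_le_mul_of_nonneg_left hE'F (by positivity)
              _ = 2 ^ d * (B * F) := by ring
          linarith
      _ ≤ (2 ^ d * ((d:ℝ) + 4)) * (A * E + B * F) := by
          nlinarith [mul_le_mul_of_nonneg_right hK1 hAE, mul_le_mul_of_nonneg_right hK2 hBF]
      _ ≤ (2 ^ d * ((d:ℝ) + 4)) * ((t⁻¹ * (t' - t)) * (A * E + B * F)) := by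
          apply mul_le_mul_of_nonneg_left _ (by positivity)
          exact le_mul_of_one_le_left (by linarith) h1
      _ = 2 ^ d * ((d:ℝ) + 4) * t⁻¹ * (t' - t) * (A * E + B * F) := by ring
end
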